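/- arXiv:1308.6621 — 3 statements merged into one kernel-verified Lean document; each statement's English description precedes it below -/
import Mathlib

section
/- If S = {m} is admissible (2 ≤ m ≤ n-1), then the number of signed permutations in B_n with peak set {m} equals (C(n-1,m-1) - 1)·2^{2n-2}. -/
open Finset

/-- Value at (1-indexed) position `i` of the signed permutation represented by a pair
`(σ, ε)`: the value is `±(σ(i)+1)`, negative iff `ε i = true`. Returns 0 out of range. -/
def bval (n : ℕ) (π : Equiv.Perm (Fin n) × (Fin n → Bool)) (i : ℕ) : ℤ :=
  if h : i - 1 < n then
    (if π.2 ⟨i - 1, h⟩ then (-1 : ℤ) else 1) * (((π.1 ⟨i - 1, h⟩ : ℕ) : ℤ) + 1)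
  else 0

/-- Peak set of a signed permutation: positions `i ∈ {2,…,n-1}` with `π_{i-1} < π_i > π_{i+1}`. -/
def bPeakSet (n : ℕ) (π : Equiv.Perm (Fin n) × (Fin n → Bool)) : Finset ℕ :=
  (Finset.Icc 2 (n - 1)).filter fun i =>
    bval n π (i - 1) < bval n π i ∧ bval n π (i + 1) < bval n π i

/-- `#P_B(S,n)`: number of signed permutations in `B_n` with peak set exactly `S`. -/
def PB (n : ℕ) (S : Finset ℕ) : ℕ :=
  (Finset.univ.filter fun π : Equiv.Perm (Fin n) × (Fin n → Bool) => bPeakSet n π = S).card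

/-- Value with the convention `π_0 = 0`. -/
def bvalHat (n : ℕ) (π : Equiv.Perm (Fin n) × (Fin n → Bool)) (i : ℕ) : ℤ :=
  if i = 0 then 0 else bval n π i

/-- Peak set with `π_0 = 0`: positions `i ∈ {1,…,n-1}` with `π_{i-1} < π_i > π_{i+1}`. -/
def bPeakSetHat (n : ℕ) (π : Equiv.Perm (Fin n) × (Fin n → Bool)) : Finset ℕ :=
  (Finset.Icc 1 (n - 1)).filter fun i =>
    bvalHat n π (i - 1) < bvalHat n π i ∧ bvalHat n π (i + 1) < bvalHat n π i

/-- `#P̂_B(S,n)`: signed permutations with `π_0 = 0` prepended and peak set exactly `S`. -/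
def PBhat (n : ℕ) (S : Finset ℕ) : ℕ :=
  (Finset.univ.filter fun π : Equiv.Perm (Fin n) × (Fin n → Bool) => bPeakSetHat n π = S).card

/-- Value at (1-indexed) position `i` of an ordinary permutation of `{1,…,n}`. -/
def sval (n : ℕ) (π : Equiv.Perm (Fin n)) (i : ℕ) : ℤ :=
  if h : i - 1 < n then ((π ⟨i - 1, h⟩ : ℕ) : ℤ) + 1 else 0

/-- Peak set of an ordinary permutation: positions `i ∈ {2,…,n-1}`. -/
def sPeakSet (n : ℕ) (π : Equiv.Perm (Fin n)) : Finset ℕ :=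
  (Finset.Icc 2 (n - 1)).filter fun i =>
    sval n π (i - 1) < sval n π i ∧ sval n π (i + 1) < sval n π i

/-- `#P(S,n)`: number of permutations of `{1,…,n}` with peak set exactly `S`. -/
def PP (n : ℕ) (S : Finset ℕ) : ℕ :=
  (Finset.univ.filter fun π : Equiv.Perm (Fin n) => sPeakSet n π = S).card

def svalHat (n : ℕ) (π : Equiv.Perm (Fin n)) (i : ℕ) : ℤ :=
  if i = 0 then 0 else sval n π i

/-- Peak set with the convention `π_0 = 0`: positions `i ∈ {1,…,n-1}`. -/
def sPeakSetHat (n : ℕ) (π : Equiv.Perm (Fin n)) : Finset ℕ :=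
  (Finset.Icc 1 (n - 1)).filter fun i =>
    svalHat n π (i - 1) < svalHat n π i ∧ svalHat n π (i + 1) < svalHat n π i

/-- `#P̂(S,n)`: permutations of `{1,…,n}` with `π_0 = 0` prepended and peak set exactly `S`. -/
def PPhat (n : ℕ) (S : Finset ℕ) : ℕ :=
  (Finset.univ.filter fun π : Equiv.Perm (Fin n) => sPeakSetHat n π = S).card



namespace Stmt6

/-- Peak set of a list, 1-indexed positions. -/
def peaks (l : List ℤ) : Finset ℕ :=
  (Finset.Icc 2 (l.length - 1)).filter fun i =>
    l.getD (i-2) 0 < l.getD (i-1) 0 ∧ l.getD i 0 < l.getD (i-1) 0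

lemma mem_peaks {l : List ℤ} {i : ℕ} : i ∈ peaks l ↔
    2 ≤ i ∧ i ≤ l.length - 1 ∧ l.getD (i-2) 0 < l.getD (i-1) 0 ∧ l.getD i 0 < l.getD (i-1) 0 := by
  simp [peaks, Finset.mem_filter, Finset.mem_Icc, and_assoc]

lemma peaks_lb {l : List ℤ} {i : ℕ} (h : i ∈ peaks l) : 2 ≤ i := (mem_peaks.1 h).1
lemma peaks_ub {l : List ℤ} {i : ℕ} (h : i ∈ peaks l) : i ≤ l.length - 1 := (mem_peaks.1 h).2.1

/-- All orderings of a finset as lists. -/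
noncomputable def permsF (V : Finset ℤ) : Finset (List ℤ) :=
  ⟨(V.toList.permutations : Multiset (List ℤ)), V.toList.nodup_permutations V.nodup_toList⟩

lemma mem_permsF {V : Finset ℤ} {l : List ℤ} : l ∈ permsF V ↔ l.Perm V.toList := by
  exact Multiset.mem_coe.trans List.mem_permutations

lemma mem_permsF' {V : Finset ℤ} {l : List ℤ} : l ∈ permsF V ↔ l.Nodup ∧ l.toFinset = V := by
  rw [mem_permsF]
  constructor
  · intro h
    refine ⟨h.nodup_iff.2 V.nodup_toList, ?_⟩
    ext a; simp [List.mem_toFinset, h.mem_iff, Finset.mem_toList]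
  · rintro ⟨h1, h2⟩
    refine List.perm_of_nodup_nodup_toFinset_eq h1 V.nodup_toList ?_
    rw [h2]; ext a; simp [Finset.mem_toList]

lemma length_mem_permsF {V : Finset ℤ} {l : List ℤ} (h : l ∈ permsF V) : l.length = V.card := by
  rw [(mem_permsF.1 h).length_eq, Finset.length_toList]

lemma mem_of_mem_permsF {V : Finset ℤ} {l : List ℤ} (h : l ∈ permsF V) {x : ℤ} (hx : x ∈ l) :
    x ∈ V := by
  rw [mem_permsF] at h; simpa [Finset.mem_toList] using h.subset hx





lemma getD_split_lt {l1 l2 : List ℤ} {M : ℤ} {k : ℕ} (h : k < l1.length) :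
    (l1 ++ M :: l2).getD k 0 = l1.getD k 0 := List.getD_append _ _ _ _ h

lemma getD_split_eq {l1 l2 : List ℤ} {M : ℤ} :
    (l1 ++ M :: l2).getD l1.length 0 = M := by
  rw [List.getD_append_right _ _ _ _ le_rfl, Nat.sub_self]; rfl

lemma getD_split_gt {l1 l2 : List ℤ} {M : ℤ} {k : ℕ} (h : l1.length < k) :
    (l1 ++ M :: l2).getD k 0 = l2.getD (k - l1.length - 1) 0 := by
  rw [List.getD_append_right _ _ _ _ h.le]
  obtain ⟨p, hp⟩ : ∃ p, k - l1.length = p + 1 := ⟨k - l1.length - 1, by omega⟩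
  rw [hp, List.getD_cons_succ, Nat.add_sub_cancel]

lemma getD_mem' {l : List ℤ} {k : ℕ} (h : k < l.length) : l.getD k 0 ∈ l := by
  rw [List.getD_eq_getElem _ _ h]; exact List.getElem_mem h


lemma peaks_append_cons {l1 l2 : List ℤ} {M : ℤ}
    (h1 : ∀ x ∈ l1, x < M) (h2 : ∀ x ∈ l2, x < M) :
    peaks (l1 ++ M :: l2) = (peaks l1 ∪ (if l1 = [] ∨ l2 = [] then ∅ else {l1.length + 1}))
      ∪ (peaks l2).image (· + (l1.length + 1)) := by
  have hlen : (l1 ++ M :: l2).length = l1.length + l2.length + 1 := by simp; omega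
  ext i
  simp only [Finset.mem_union, Finset.mem_image, mem_peaks, hlen]
  have SL : ∀ k, k < l1.length → (l1 ++ M :: l2).getD k 0 = l1.getD k 0 :=
    fun k hk => getD_split_lt hk
  have SE : (l1 ++ M :: l2).getD l1.length 0 = M := getD_split_eq
  have SG : ∀ k, l1.length < k → (l1 ++ M :: l2).getD k 0 = l2.getD (k - l1.length - 1) 0 :=
    fun k hk => getD_split_gt hk
  constructor
  · rintro ⟨hi2, hiu, ha, hb⟩
    rcases lt_trichotomy i l1.length with hc | hc | hc
    · left; left
      rw [SL _ (by omega), SL _ (by omega)] at ha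
      rw [SL _ (by omega), SL _ (by omega)] at hb
      exact ⟨hi2, by omega, ha, hb⟩
    · exfalso
      rw [hc, SE, SL _ (by omega)] at hb
      exact absurd (h1 _ (getD_mem' (by omega))) (not_lt.2 hb.le)
    · rcases Nat.lt_or_ge i (l1.length + 2) with hd | hd
      · -- i = l1.length + 1
        have hi : i = l1.length + 1 := by omega
        left; right
        have hne : ¬(l1 = [] ∨ l2 = []) := by
          rintro (rfl | rfl)
          · simp at hi; omega
          · simp at hiu hi; omega
        rw [if_neg hne, Finset.mem_singleton]
        exact hi
      · rcases Nat.lt_or_ge i (l1.length + 3) with he | he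
        · exfalso
          have e1 : i - 2 = l1.length := by omega
          rw [e1, SE, SG _ (by omega)] at ha
          exact absurd (h2 _ (getD_mem' (by omega))) (not_lt.2 ha.le)
        · right
          have e1 : i - 2 - l1.length - 1 = i - l1.length - 1 - 2 := by omega
          have e2 : i - 1 - l1.length - 1 = i - l1.length - 1 - 1 := by omega
          rw [SG _ (by omega), SG _ (by omega), e1, e2] at ha
          rw [SG _ (by omega), SG _ (by omega), e2] at hb
          exact ⟨i - l1.length - 1, ⟨by omega, by omega, ha, hb⟩, by omega⟩
  · rintro ((⟨hi2, hiu, ha, hb⟩ | hp) | ⟨p, ⟨hp2, hpu, ha, hb⟩, rfl⟩)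
    · have hj : i < l1.length := by omega
      refine ⟨hi2, by omega, ?_, ?_⟩
      · rw [SL _ (by omega), SL _ (by omega)]; exact ha
      · rw [SL _ (by omega), SL _ (by omega)]; exact hb
    · by_cases hne : l1 = [] ∨ l2 = []
      · rw [if_pos hne] at hp; exact absurd hp (Finset.notMem_empty _)
      · rw [if_neg hne, Finset.mem_singleton] at hp
        push_neg at hne
        have hl1 : 1 ≤ l1.length := List.length_pos_of_ne_nil hne.1
        have hl2 : 1 ≤ l2.length := List.length_pos_of_ne_nil hne.2
        subst hp
        have e1 : l1.length + 1 - 2 = l1.length - 1 := by omega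
        have e2 : l1.length + 1 - 1 = l1.length := by omega
        refine ⟨by omega, by omega, ?_, ?_⟩
        · rw [e1, e2, SE, SL _ (by omega)]
          exact h1 _ (getD_mem' (by omega))
        · rw [e2, SE, SG _ (by omega)]
          exact h2 _ (getD_mem' (by omega))
    · have hL : 2 ≤ l2.length := by omega
      have e1 : p + (l1.length + 1) - 2 - l1.length - 1 = p - 2 := by omega
      have e2 : p + (l1.length + 1) - 1 - l1.length - 1 = p - 1 := by omega
      have e3 : p + (l1.length + 1) - l1.length - 1 = p := by omega
      refine ⟨by omega, by omega, ?_, ?_⟩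
      · rw [SG _ (by omega), SG _ (by omega), e1, e2]; exact ha
      · rw [SG _ (by omega), SG _ (by omega), e2, e3]; exact hb


lemma peaks_nil : peaks ([] : List ℤ) = ∅ := rfl

lemma peaks_cons_max {t : List ℤ} {M : ℤ} (ht : ∀ x ∈ t, x < M) :
    peaks (M :: t) = (peaks t).image (· + 1) := by
  have := peaks_append_cons (l1 := []) (l2 := t) (M := M) (by simp) ht
  simpa [peaks_nil] using this

lemma peaks_concat_max {t : List ℤ} {M : ℤ} (ht : ∀ x ∈ t, x < M) :
    peaks (t ++ [M]) = peaks t := by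
  have := peaks_append_cons (l1 := t) (l2 := []) (M := M) ht (by simp)
  simpa [peaks_nil] using this

lemma peaks_middle {l1 l2 : List ℤ} {M : ℤ} (h1 : l1 ≠ []) (h2 : l2 ≠ [])
    (hm1 : ∀ x ∈ l1, x < M) (hm2 : ∀ x ∈ l2, x < M)
    (hp1 : peaks l1 = ∅) (hp2 : peaks l2 = ∅) :
    peaks (l1 ++ M :: l2) = {l1.length + 1} := by
  rw [peaks_append_cons hm1 hm2, hp1, hp2]
  simp [h1, h2]

lemma image_succ_eq_singleton {S : Finset ℕ} {c m : ℕ} (hm : c ≤ m) :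
    S.image (· + c) = {m} ↔ S = {m - c} := by
  have hinj : Function.Injective (· + c : ℕ → ℕ) := add_left_injective c
  have h1 : ({m} : Finset ℕ) = ({m - c} : Finset ℕ).image (· + c) := by
    rw [Finset.image_singleton]
    congr 1
    omega
  rw [h1]
  exact ⟨fun h => Finset.image_injective hinj h, fun h => by rw [h]⟩

lemma image_succ_eq_empty {S : Finset ℕ} {c : ℕ} : S.image (· + c) = ∅ ↔ S = ∅ := by
  simp [Finset.image_eq_empty]

/-- `M` sits at (0-indexed) position `j` of `l`. -/
def atPos (l : List ℤ) (M : ℤ) (j : ℕ) : Prop := j < l.length ∧ l.getD j 0 = M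

instance (l : List ℤ) (M : ℤ) (j : ℕ) : Decidable (atPos l M j) := by
  unfold atPos; infer_instance

lemma atPos_unique {l : List ℤ} (hl : l.Nodup) {M : ℤ} {j k : ℕ}
    (hj : atPos l M j) (hk : atPos l M k) : j = k := by
  obtain ⟨hj1, hj2⟩ := hj
  obtain ⟨hk1, hk2⟩ := hk
  rw [List.getD_eq_getElem _ _ hj1] at hj2
  rw [List.getD_eq_getElem _ _ hk1] at hk2
  exact (List.Nodup.getElem_inj_iff hl).1 (hj2.trans hk2.symm)




lemma cons_mem_permsF {V : Finset ℤ} {M : ℤ} (hM : M ∈ V) {t : List ℤ}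
    (ht : t ∈ permsF (V.erase M)) : (M :: t) ∈ permsF V := by
  rw [mem_permsF'] at ht ⊢
  obtain ⟨h1, h2⟩ := ht
  have hMt : M ∉ t := by
    intro h
    have := h2 ▸ List.mem_toFinset.2 h
    exact (Finset.mem_erase.1 this).1 rfl
  refine ⟨List.nodup_cons.2 ⟨hMt, h1⟩, ?_⟩
  rw [List.toFinset_cons, h2, Finset.insert_erase hM]

lemma concat_mem_permsF {V : Finset ℤ} {M : ℤ} (hM : M ∈ V) {t : List ℤ}
    (ht : t ∈ permsF (V.erase M)) : (t ++ [M]) ∈ permsF V := by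
  have h := cons_mem_permsF hM ht
  rw [mem_permsF] at h ⊢
  exact (List.perm_append_singleton M t).trans h

lemma notmem_of_permsF_erase {V : Finset ℤ} {M : ℤ} {t : List ℤ}
    (ht : t ∈ permsF (V.erase M)) : M ∉ t := by
  intro h
  exact (Finset.mem_erase.1 (mem_of_mem_permsF ht h)).1 rfl

lemma card_head (V : Finset ℤ) (M : ℤ) (hM : M ∈ V) (P : List ℤ → Prop) [DecidablePred P] :
    ((permsF V).filter fun l => atPos l M 0 ∧ P l).card
      = ((permsF (V.erase M)).filter fun t => P (M :: t)).card := by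
  symm
  refine Finset.card_bij (fun t _ => M :: t) ?_ ?_ ?_
  · intro t ht
    rw [Finset.mem_filter] at ht ⊢
    exact ⟨cons_mem_permsF hM ht.1, ⟨by simp, rfl⟩, ht.2⟩
  · intro a _ b _ h
    simpa using h
  · intro b hb
    rw [Finset.mem_filter] at hb
    obtain ⟨hb1, ⟨hp1, hp2⟩, hb2⟩ := hb
    obtain ⟨x, t, rfl⟩ : ∃ x t, b = x :: t := by
      cases b with
      | nil => simp at hp1
      | cons x t => exact ⟨x, t, rfl⟩
    have hx : M = x := by
      have : x = M := by simpa using hp2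
      omega
    subst hx
    have hmem := mem_permsF'.1 hb1
    have hMt : M ∉ t := (List.nodup_cons.1 hmem.1).1
    refine ⟨t, Finset.mem_filter.2 ⟨?_, hb2⟩, rfl⟩
    rw [mem_permsF']
    refine ⟨(List.nodup_cons.1 hmem.1).2, ?_⟩
    rw [← hmem.2, List.toFinset_cons, Finset.erase_insert (by simpa using hMt)]

lemma card_last (V : Finset ℤ) (M : ℤ) (hM : M ∈ V) (P : List ℤ → Prop) [DecidablePred P] :
    ((permsF V).filter fun l => atPos l M (V.card - 1) ∧ P l).card
      = ((permsF (V.erase M)).filter fun t => P (t ++ [M])).card := by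
  symm
  have hcard : 1 ≤ V.card := Finset.card_pos.2 ⟨M, hM⟩
  refine Finset.card_bij (fun t _ => t ++ [M]) ?_ ?_ ?_
  · intro t ht
    rw [Finset.mem_filter] at ht ⊢
    have htP := concat_mem_permsF hM ht.1
    have hlen : (t ++ [M]).length = V.card := length_mem_permsF htP
    have htl : t.length = V.card - 1 := by simp at hlen; omega
    refine ⟨htP, ⟨?_, ?_⟩, ht.2⟩
    · show V.card - 1 < (t ++ [M]).length
      omega
    · show (t ++ [M]).getD (V.card - 1) 0 = M
      rw [← htl]
      exact getD_split_eq (l2 := [])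
  · intro a ha b hb h
    have := length_mem_permsF (Finset.mem_filter.1 ha).1
    have := length_mem_permsF (Finset.mem_filter.1 hb).1
    exact (List.append_inj_left h (by omega))
  · intro b hb
    rw [Finset.mem_filter] at hb
    obtain ⟨hb1, ⟨hp1, hp2⟩, hb2⟩ := hb
    have hbne : b ≠ [] := by
      intro h; rw [h] at hp1; simp at hp1
    have hlast : b.getLast hbne = M := by
      rw [List.getLast_eq_getElem]
      rw [List.getD_eq_getElem _ _ hp1] at hp2
      rw [← hp2]
      congr 1
      rw [length_mem_permsF hb1]
    have hsplit : b.dropLast ++ [M] = b := by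
      rw [← hlast]; exact List.dropLast_append_getLast hbne
    have hmem := mem_permsF'.1 hb1
    have hnd : (b.dropLast ++ [M]).Nodup := by rw [hsplit]; exact hmem.1
    have hMd : M ∉ b.dropLast := by
      intro h
      have := List.disjoint_of_nodup_append hnd
      exact this h (by simp)
    refine ⟨b.dropLast, Finset.mem_filter.2 ⟨?_, by rw [hsplit]; exact hb2⟩, hsplit⟩
    rw [mem_permsF']
    refine ⟨(List.nodup_append.1 hnd).1, ?_⟩
    have : b.toFinset = insert M b.dropLast.toFinset := by
      rw [← hsplit]; simp [List.toFinset_append]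
    rw [← hmem.2, this, Finset.erase_insert (by simpa using hMd)]

lemma peaks_eq_empty_of_short {l : List ℤ} (h : l.length ≤ 2) : peaks l = ∅ := by
  ext i
  simp only [mem_peaks, Finset.notMem_empty, iff_false]
  rintro ⟨h1, h2, -⟩
  omega

lemma lt_max_of_ne {V : Finset ℤ} {M x : ℤ} (hmax : ∀ y ∈ V, y ≤ M) (hx : x ∈ V)
    (hne : x ≠ M) : x < M := lt_of_le_of_ne (hmax x hx) hne

lemma interior_peak {V : Finset ℤ} {M : ℤ} (hmax : ∀ x ∈ V, x ≤ M)
    {l : List ℤ} (hl : l ∈ permsF V) {j : ℕ} (hj : atPos l M j) (h1 : 1 ≤ j)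
    (h2 : j + 1 ≤ l.length - 1) : (j + 1) ∈ peaks l := by
  have hnd : l.Nodup := (mem_permsF'.1 hl).1
  have hlen : j + 2 ≤ l.length := by
    obtain ⟨hj1, _⟩ := hj
    omega
  have key : ∀ k, k < l.length → k ≠ j → l.getD k 0 < M := by
    intro k hk hkj
    refine lt_max_of_ne hmax (mem_of_mem_permsF hl (getD_mem' hk)) ?_
    intro h
    exact hkj (atPos_unique hnd ⟨hk, h⟩ hj)
  have e1 : j + 1 - 2 = j - 1 := by omega
  have e2 : j + 1 - 1 = j := by omega
  rw [mem_peaks, e1, e2, hj.2]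
  exact ⟨by omega, h2, key _ (by omega) (by omega), key _ (by omega) (by omega)⟩

lemma pos_cases {V : Finset ℤ} {M : ℤ} (hM : M ∈ V) (hmax : ∀ x ∈ V, x ≤ M)
    {l : List ℤ} (hl : l ∈ permsF V) :
    ∃ j, atPos l M j ∧
      (j = 0 ∨ j = V.card - 1 ∨ (1 ≤ j ∧ j + 1 ≤ V.card - 1 ∧ j + 1 ∈ peaks l)) := by
  have hMl : M ∈ l := by
    rw [mem_permsF'] at hl
    rw [← List.mem_toFinset, hl.2]
    exact hM
  obtain ⟨k, hk, he⟩ := List.mem_iff_getElem.1 hMl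
  have hjk : atPos l M k := ⟨hk, by rw [List.getD_eq_getElem _ _ hk]; exact he⟩
  have hlen : l.length = V.card := length_mem_permsF hl
  refine ⟨k, hjk, ?_⟩
  rcases Nat.eq_zero_or_pos k with rfl | hk0
  · exact Or.inl rfl
  rcases Nat.lt_or_ge (k + 1) l.length with hk1 | hk1
  · exact Or.inr (Or.inr ⟨hk0, by omega, interior_peak hmax hl hjk hk0 (by omega)⟩)
  · exact Or.inr (Or.inl (by omega))

lemma card_peakFree : ∀ (n : ℕ) (V : Finset ℤ), V.card = n → 1 ≤ n →
    ((permsF V).filter fun l => peaks l = ∅).card = 2 ^ (n - 1) := by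
  intro n
  induction n using Nat.strong_induction_on with
  | _ n ih =>
  intro V hV hn
  have hne : V.Nonempty := Finset.card_pos.1 (by omega)
  set M := V.max' hne with hMdef
  have hMV : M ∈ V := V.max'_mem hne
  have hmax : ∀ x ∈ V, x ≤ M := fun x hx => V.le_max' x hx
  rcases Nat.lt_or_ge n 2 with hn2 | hn2
  · -- n = 1
    have h1 : n = 1 := by omega
    obtain ⟨v, rfl⟩ := Finset.card_eq_one.1 (hV.trans h1)
    have hperm : permsF {v} = {[v]} := by
      ext l
      rw [mem_permsF, Finset.toList_singleton, Finset.mem_singleton, List.perm_singleton]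
    rw [hperm, h1]
    rw [Finset.filter_singleton, if_pos (peaks_eq_empty_of_short (by simp))]
    simp
  · -- n ≥ 2
    have hV' : (V.erase M).card = n - 1 := by rw [Finset.card_erase_of_mem hMV, hV]
    have hmax' : ∀ x ∈ V.erase M, x < M := fun x hx =>
      lt_max_of_ne hmax (Finset.mem_of_mem_erase hx) (Finset.ne_of_mem_erase hx)
    have hsplit : (permsF V).filter (fun l => peaks l = ∅)
        = ((permsF V).filter fun l => atPos l M 0 ∧ peaks l = ∅)
          ∪ ((permsF V).filter fun l => atPos l M (V.card - 1) ∧ peaks l = ∅) := by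
      ext l
      simp only [Finset.mem_filter, Finset.mem_union]
      constructor
      · rintro ⟨hl, hp⟩
        obtain ⟨j, hj, hc⟩ := pos_cases hMV hmax hl
        rcases hc with rfl | hc | ⟨-, -, hpk⟩
        · exact Or.inl ⟨hl, hj, hp⟩
        · exact Or.inr ⟨hl, hc ▸ hj, hp⟩
        · rw [hp] at hpk
          exact absurd hpk (Finset.notMem_empty _)
      · rintro (⟨hl, -, hp⟩ | ⟨hl, -, hp⟩) <;> exact ⟨hl, hp⟩
    have hdisj : Disjoint ((permsF V).filter fun l => atPos l M 0 ∧ peaks l = ∅)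
        ((permsF V).filter fun l => atPos l M (V.card - 1) ∧ peaks l = ∅) := by
      rw [Finset.disjoint_left]
      rintro l h1 h2
      rw [Finset.mem_filter] at h1 h2
      have := atPos_unique (mem_permsF'.1 h1.1).1 h1.2.1 h2.2.1
      omega
    rw [hsplit, Finset.card_union_of_disjoint hdisj]
    rw [card_head V M hMV, card_last V M hMV]
    have hT1 : ((permsF (V.erase M)).filter fun t => peaks (M :: t) = ∅).card
        = ((permsF (V.erase M)).filter fun t => peaks t = ∅).card := by
      congr 1
      apply Finset.filter_congr
      intro t ht
      have : peaks (M :: t) = (peaks t).image (· + 1) :=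
        peaks_cons_max (fun x hx => hmax' x (mem_of_mem_permsF ht hx))
      rw [this]
      simp [image_succ_eq_empty]
    have hT3 : ((permsF (V.erase M)).filter fun t => peaks (t ++ [M]) = ∅).card
        = ((permsF (V.erase M)).filter fun t => peaks t = ∅).card := by
      congr 1
      apply Finset.filter_congr
      intro t ht
      rw [peaks_concat_max (fun x hx => hmax' x (mem_of_mem_permsF ht hx))]
    rw [hT1, hT3, ih (n-1) (by omega) _ hV' (by omega)]
    obtain ⟨k, hk⟩ : ∃ k, n - 1 = k + 1 := ⟨n - 2, by omega⟩
    rw [hk, pow_succ]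
    simp only [Nat.add_sub_cancel]
    omega

lemma card_middle (V : Finset ℤ) (M : ℤ) (hMV : M ∈ V) (hmax : ∀ x ∈ V, x ≤ M)
    (j : ℕ) (hj1 : 1 ≤ j) (hj2 : j + 1 ≤ V.card - 1) :
    ((permsF V).filter fun l => atPos l M j ∧ peaks l = {j + 1}).card
      = ∑ A ∈ (V.erase M).powersetCard j,
          ((permsF A).filter fun l => peaks l = ∅).card *
          ((permsF ((V.erase M) \ A)).filter fun l => peaks l = ∅).card := by
  classical
  set V' := V.erase M with hV'def
  have hmax' : ∀ x ∈ V', x < M := fun x hx =>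
    lt_max_of_ne hmax (Finset.mem_of_mem_erase hx) (Finset.ne_of_mem_erase hx)
  have hV'card : V'.card = V.card - 1 := Finset.card_erase_of_mem hMV
  have hrhs : ∑ A ∈ V'.powersetCard j,
      ((permsF A).filter fun l => peaks l = ∅).card *
      ((permsF (V' \ A)).filter fun l => peaks l = ∅).card
      = ((V'.powersetCard j).sigma fun A =>
          ((permsF A).filter fun l => peaks l = ∅) ×ˢ
          ((permsF (V' \ A)).filter fun l => peaks l = ∅)).card := by
    rw [Finset.card_sigma]
    exact Finset.sum_congr rfl fun A _ => (Finset.card_product _ _).symm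
  rw [hrhs]
  symm
  refine Finset.card_bij (fun x _ => x.2.1 ++ M :: x.2.2) ?_ ?_ ?_
  · rintro ⟨A, l1, l2⟩ hx
    simp only [Finset.mem_sigma, Finset.mem_product, Finset.mem_filter,
      Finset.mem_powersetCard] at hx
    obtain ⟨⟨hAsub, hAcard⟩, ⟨h1m, h1p⟩, ⟨h2m, h2p⟩⟩ := hx
    obtain ⟨h1nd, h1t⟩ := mem_permsF'.1 h1m
    obtain ⟨h2nd, h2t⟩ := mem_permsF'.1 h2m
    have hl1len : l1.length = j := by
      have := length_mem_permsF h1m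
      omega
    have hl2len : l2.length = V.card - 1 - j := by
      have := length_mem_permsF h2m
      rw [Finset.card_sdiff_of_subset hAsub, hV'card, hAcard] at this
      omega
    have hMl1 : M ∉ l1 := by
      intro h
      exact absurd (hAsub (h1t ▸ List.mem_toFinset.2 h)) (Finset.notMem_erase M V)
    have hlt1 : ∀ x ∈ l1, x < M := fun x hx =>
      hmax' x (hAsub (h1t ▸ List.mem_toFinset.2 hx))
    have hlt2 : ∀ x ∈ l2, x < M := fun x hx =>
      hmax' x (Finset.mem_sdiff.1 (h2t ▸ List.mem_toFinset.2 hx)).1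
    have hMl2 : M ∉ l2 := fun h => absurd rfl (hlt2 M h).ne'
    have hl1ne : l1 ≠ [] := by
      intro h; rw [h] at hl1len; simp at hl1len; omega
    have hl2ne : l2 ≠ [] := by
      intro h; rw [h] at hl2len; simp at hl2len; omega
    have hmem : (l1 ++ M :: l2) ∈ permsF V := by
      rw [mem_permsF']
      constructor
      · rw [List.nodup_append]
        refine ⟨h1nd, List.nodup_cons.2 ⟨hMl2, h2nd⟩, ?_⟩
        intro x hx1 y hx2 hxy
        subst hxy
        have hxA : x ∈ A := h1t ▸ List.mem_toFinset.2 hx1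
        rcases List.mem_cons.1 hx2 with rfl | hx2
        · exact hMl1 hx1
        · exact (Finset.mem_sdiff.1 (h2t ▸ List.mem_toFinset.2 hx2)).2 hxA
      · rw [List.toFinset_append, List.toFinset_cons, h1t, h2t]
        ext x
        simp only [Finset.mem_union, Finset.mem_insert, Finset.mem_sdiff, hV'def,
          Finset.mem_erase]
        constructor
        · rintro (hx | rfl | ⟨⟨hne, hv⟩, -⟩)
          · exact (Finset.mem_erase.1 (hAsub hx)).2
          · exact hMV
          · exact hv
        · intro hv
          by_cases hxM : x = M
          · exact Or.inr (Or.inl hxM)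
          · by_cases hxA : x ∈ A
            · exact Or.inl hxA
            · exact Or.inr (Or.inr ⟨⟨hxM, hv⟩, hxA⟩)
    refine Finset.mem_filter.2 ⟨hmem, ⟨?_, ?_⟩, ?_⟩
    · show j < (l1 ++ M :: l2).length
      rw [length_mem_permsF hmem]
      omega
    · show (l1 ++ M :: l2).getD j 0 = M
      rw [← hl1len]
      exact getD_split_eq
    · show peaks (l1 ++ M :: l2) = {j + 1}
      rw [peaks_middle hl1ne hl2ne hlt1 hlt2 h1p h2p, hl1len]
  · rintro ⟨A, l1, l2⟩ ha ⟨A', l1', l2'⟩ hb h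
    simp only at h
    simp only [Finset.mem_sigma, Finset.mem_product, Finset.mem_filter,
      Finset.mem_powersetCard] at ha hb
    obtain ⟨⟨hAsub, hAcard⟩, ⟨h1m, h1p⟩, ⟨h2m, h2p⟩⟩ := ha
    obtain ⟨⟨hAsub', hAcard'⟩, ⟨h1m', h1p'⟩, ⟨h2m', h2p'⟩⟩ := hb
    have e1 : l1.length = j := by have := length_mem_permsF h1m; omega
    have e2 : l1'.length = j := by have := length_mem_permsF h1m'; omega
    obtain rfl : l1 = l1' := List.append_inj_left h (by omega)
    obtain rfl : l2 = l2' := by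
      have := List.append_inj_right h rfl
      exact List.tail_eq_of_cons_eq this
    obtain rfl : A = A' := by
      rw [← (mem_permsF'.1 h1m).2, ← (mem_permsF'.1 h1m').2]
    rfl
  · intro b hb
    rw [Finset.mem_filter] at hb
    obtain ⟨hbm, ⟨hp1, hp2⟩, hpk⟩ := hb
    obtain ⟨hbnd, hbt⟩ := mem_permsF'.1 hbm
    have hblen : b.length = V.card := length_mem_permsF hbm
    set l1 := b.take j with hl1def
    set l2 := b.drop (j + 1) with hl2def
    have hsplit : b = l1 ++ M :: l2 := by
      conv_lhs => rw [← List.take_append_drop j b]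
      congr 1
      rw [List.drop_eq_getElem_cons hp1]
      congr 1
      rw [List.getD_eq_getElem _ _ hp1] at hp2
      exact hp2
    have hl1len : l1.length = j := by
      rw [hl1def, List.length_take]
      omega
    have hl2len : l2.length = V.card - 1 - j := by
      rw [hl2def, List.length_drop]
      omega
    have hl1nd : l1.Nodup := (List.take_sublist _ _).nodup hbnd
    have hl2nd : l2.Nodup := (List.drop_sublist _ _).nodup hbnd
    have hndsplit : (l1 ++ M :: l2).Nodup := hsplit ▸ hbnd
    have hdisj := List.disjoint_of_nodup_append hndsplit
    have hMl1 : M ∉ l1 := fun h => hdisj h List.mem_cons_self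
    have hMl2 : M ∉ l2 := by
      have := (List.nodup_append.1 hndsplit).2.1
      exact (List.nodup_cons.1 this).1
    set A := l1.toFinset with hAdef
    have hl1V : ∀ x ∈ l1, x ∈ V := fun x hx =>
      mem_of_mem_permsF hbm (hsplit ▸ List.mem_append_left _ hx)
    have hl2V : ∀ x ∈ l2, x ∈ V := fun x hx =>
      mem_of_mem_permsF hbm (hsplit ▸ List.mem_append_right _ (List.mem_cons_of_mem _ hx))
    have hAsub : A ⊆ V' := by
      intro x hx
      rw [hAdef, List.mem_toFinset] at hx
      rw [hV'def, Finset.mem_erase]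
      exact ⟨fun h => hMl1 (h ▸ hx), hl1V x hx⟩
    have hAcard : A.card = j := by
      rw [hAdef, List.toFinset_card_of_nodup hl1nd, hl1len]
    have hlt1 : ∀ x ∈ l1, x < M := fun x hx => hmax' x (hAsub (List.mem_toFinset.2 hx))
    have hlt2 : ∀ x ∈ l2, x < M := fun x hx =>
      lt_max_of_ne hmax (hl2V x hx) (fun h => hMl2 (h ▸ hx))
    have h2t : l2.toFinset = V' \ A := by
      ext x
      rw [List.mem_toFinset, Finset.mem_sdiff, hV'def, Finset.mem_erase, hAdef,
        List.mem_toFinset]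
      constructor
      · intro hx
        exact ⟨⟨fun h => hMl2 (h ▸ hx), hl2V x hx⟩, fun h => hdisj h (List.mem_cons_of_mem _ hx)⟩
      · rintro ⟨⟨hxM, hxV⟩, hxA⟩
        have : x ∈ b := by rw [← List.mem_toFinset, hbt]; exact hxV
        rw [hsplit] at this
        rcases List.mem_append.1 this with h | h
        · exact absurd h hxA
        · rcases List.mem_cons.1 h with rfl | h
          · exact absurd rfl hxM
          · exact h
    have hl1ne : l1 ≠ [] := by
      intro h; rw [h] at hl1len; simp at hl1len; omega
    have hl2ne : l2 ≠ [] := by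
      intro h; rw [h] at hl2len; simp at hl2len; omega
    have hpk' : ((peaks l1 ∪ (if l1 = [] ∨ l2 = [] then ∅ else {l1.length + 1}))
        ∪ (peaks l2).image (· + (l1.length + 1))) = {j + 1} := by
      rw [← peaks_append_cons hlt1 hlt2, ← hsplit]
      exact hpk
    have hpl1 : peaks l1 = ∅ := by
      rw [Finset.eq_empty_iff_forall_notMem]
      intro p hp
      have hpin : p ∈ ({j + 1} : Finset ℕ) := by
        rw [← hpk']
        exact Finset.mem_union_left _ (Finset.mem_union_left _ hp)
      have := peaks_ub hp
      rw [Finset.mem_singleton] at hpin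
      omega
    have hpl2 : peaks l2 = ∅ := by
      rw [Finset.eq_empty_iff_forall_notMem]
      intro p hp
      have hpin : p + (l1.length + 1) ∈ ({j + 1} : Finset ℕ) := by
        rw [← hpk']
        exact Finset.mem_union_right _ (Finset.mem_image_of_mem _ hp)
      have := peaks_lb hp
      rw [Finset.mem_singleton] at hpin
      omega
    refine ⟨⟨A, l1, l2⟩, ?_, hsplit.symm⟩
    simp only [Finset.mem_sigma, Finset.mem_product, Finset.mem_filter,
      Finset.mem_powersetCard]
    refine ⟨⟨hAsub, hAcard⟩, ⟨mem_permsF'.2 ⟨hl1nd, rfl⟩, hpl1⟩,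
      ⟨mem_permsF'.2 ⟨hl2nd, h2t⟩, hpl2⟩⟩

lemma filter_peaks_singleton_empty {V : Finset ℤ} {p : ℕ} (h : p < 2 ∨ V.card - 1 < p) :
    ((permsF V).filter fun l => peaks l = {p}) = ∅ := by
  rw [Finset.eq_empty_iff_forall_notMem]
  intro l hl
  rw [Finset.mem_filter] at hl
  have hp : p ∈ peaks l := hl.2 ▸ Finset.mem_singleton_self p
  have h1 := peaks_lb hp
  have h2 := peaks_ub hp
  rw [length_mem_permsF hl.1] at h2
  omega

lemma card_peak_singleton : ∀ (n : ℕ) (V : Finset ℤ), V.card = n → ∀ m, 2 ≤ m → m ≤ n - 1 →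
    ((permsF V).filter fun l => peaks l = {m}).card
      = (Nat.choose (n-1) (m-1) - 1) * 2 ^ (n - 2) := by
  intro n
  induction n using Nat.strong_induction_on with
  | _ n ih =>
  intro V hV m hm2 hmn
  have hn3 : 3 ≤ n := by omega
  have hne : V.Nonempty := Finset.card_pos.1 (by omega)
  set M := V.max' hne with hMdef
  have hMV : M ∈ V := V.max'_mem hne
  have hmax : ∀ x ∈ V, x ≤ M := fun x hx => V.le_max' x hx
  have hV' : (V.erase M).card = n - 1 := by rw [Finset.card_erase_of_mem hMV, hV]
  have hmax' : ∀ x ∈ V.erase M, x < M := fun x hx =>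
    lt_max_of_ne hmax (Finset.mem_of_mem_erase hx) (Finset.ne_of_mem_erase hx)
  set P := fun l : List ℤ => peaks l = {m} with hPdef
  have hsplit : (permsF V).filter P
      = (((permsF V).filter fun l => atPos l M 0 ∧ P l)
          ∪ ((permsF V).filter fun l => atPos l M (m - 1) ∧ P l))
          ∪ ((permsF V).filter fun l => atPos l M (V.card - 1) ∧ P l) := by
    ext l
    simp only [Finset.mem_filter, Finset.mem_union]
    constructor
    · rintro ⟨hl, hp⟩
      obtain ⟨j, hj, hc⟩ := pos_cases hMV hmax hl
      rcases hc with rfl | hc | ⟨-, -, hpk⟩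
      · exact Or.inl (Or.inl ⟨hl, hj, hp⟩)
      · exact Or.inr ⟨hl, hc ▸ hj, hp⟩
      · have hp2 : peaks l = {m} := by simpa [hPdef] using hp
        rw [hp2, Finset.mem_singleton] at hpk
        have hjm : j = m - 1 := by omega
        exact Or.inl (Or.inr ⟨hl, hjm ▸ hj, hp⟩)
    · rintro ((⟨hl, -, hp⟩ | ⟨hl, -, hp⟩) | ⟨hl, -, hp⟩) <;> exact ⟨hl, hp⟩
  have hdisj : ∀ j k : ℕ, j ≠ k → Disjoint ((permsF V).filter fun l => atPos l M j ∧ P l)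
      ((permsF V).filter fun l => atPos l M k ∧ P l) := by
    intro j k hjk
    rw [Finset.disjoint_left]
    rintro l h1 h2
    rw [Finset.mem_filter] at h1 h2
    exact hjk (atPos_unique (mem_permsF'.1 h1.1).1 h1.2.1 h2.2.1)
  have hd12 : Disjoint ((permsF V).filter fun l => atPos l M 0 ∧ P l)
      ((permsF V).filter fun l => atPos l M (m - 1) ∧ P l) := hdisj _ _ (by omega)
  have hd3 : Disjoint (((permsF V).filter fun l => atPos l M 0 ∧ P l)
      ∪ ((permsF V).filter fun l => atPos l M (m - 1) ∧ P l))
      ((permsF V).filter fun l => atPos l M (V.card - 1) ∧ P l) := by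
    rw [Finset.disjoint_union_left]
    exact ⟨hdisj _ _ (by omega), hdisj _ _ (by omega)⟩
  rw [hsplit, Finset.card_union_of_disjoint hd3, Finset.card_union_of_disjoint hd12]
  -- T1
  have hT1 : ((permsF V).filter fun l => atPos l M 0 ∧ P l).card
      = (Nat.choose (n-2) (m-2) - 1) * 2 ^ (n - 3) := by
    rw [card_head V M hMV P]
    have heq : ((permsF (V.erase M)).filter fun t => P (M :: t))
        = ((permsF (V.erase M)).filter fun t => peaks t = {m - 1}) := by
      apply Finset.filter_congr
      intro t ht
      rw [hPdef]
      simp only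
      rw [peaks_cons_max (fun x hx => hmax' x (mem_of_mem_permsF ht hx)),
        image_succ_eq_singleton (by omega : 1 ≤ m)]
    rw [heq]
    rcases Nat.lt_or_ge m 3 with hm3 | hm3
    · have hm2' : m = 2 := by omega
      rw [filter_peaks_singleton_empty (Or.inl (by omega))]
      rw [hm2']
      simp
    · have := ih (n-1) (by omega) _ hV' (m-1) (by omega) (by omega)
      rw [this]
      congr 2 <;> omega
  -- T3
  have hT3 : ((permsF V).filter fun l => atPos l M (V.card - 1) ∧ P l).card
      = (Nat.choose (n-2) (m-1) - 1) * 2 ^ (n - 3) := by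
    rw [card_last V M hMV P]
    have heq : ((permsF (V.erase M)).filter fun t => P (t ++ [M]))
        = ((permsF (V.erase M)).filter fun t => peaks t = {m}) := by
      apply Finset.filter_congr
      intro t ht
      rw [hPdef]
      simp only
      rw [peaks_concat_max (fun x hx => hmax' x (mem_of_mem_permsF ht hx))]
    rw [heq]
    rcases Nat.lt_or_ge m (n-1) with hmlt | hmge
    · have := ih (n-1) (by omega) _ hV' m (by omega) (by omega)
      rw [this]
      congr 2 <;> omega
    · have hm' : m = n - 1 := by omega
      rw [filter_peaks_singleton_empty (Or.inr (by rw [hV']; omega))]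
      have : Nat.choose (n-2) (m-1) = 1 := by
        rw [hm']
        have : n - 1 - 1 = n - 2 := by omega
        rw [this, Nat.choose_self]
      rw [this]
      simp
  -- T2
  have hT2 : ((permsF V).filter fun l => atPos l M (m - 1) ∧ P l).card
      = Nat.choose (n-1) (m-1) * 2 ^ (n - 3) := by
    have hmm : m - 1 + 1 = m := by omega
    have := card_middle V M hMV hmax (m-1) (by omega) (by rw [hV]; omega)
    rw [hmm] at this
    simp only [hPdef]
    rw [this]
    have hterm : ∀ A ∈ (V.erase M).powersetCard (m-1),
        ((permsF A).filter fun l => peaks l = ∅).card *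
        ((permsF ((V.erase M) \ A)).filter fun l => peaks l = ∅).card
        = 2 ^ (n - 3) := by
      intro A hA
      rw [Finset.mem_powersetCard] at hA
      obtain ⟨hAsub, hAcard⟩ := hA
      have hcs : ((V.erase M) \ A).card = n - m := by
        rw [Finset.card_sdiff_of_subset hAsub, hV', hAcard]
        omega
      rw [card_peakFree (m-1) A hAcard (by omega),
        card_peakFree (n-m) _ hcs (by omega), ← pow_add]
      congr 1
      omega
    rw [Finset.sum_congr rfl hterm, Finset.sum_const, Finset.card_powersetCard, hV',
      smul_eq_mul]
  rw [hT1, hT2, hT3]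
  set a := Nat.choose (n-2) (m-2) with hadef
  set b := Nat.choose (n-2) (m-1) with hbdef
  have hab : Nat.choose (n-1) (m-1) = a + b := by
    have h1 : n - 1 = (n - 2) + 1 := by omega
    have h2 : m - 1 = (m - 2) + 1 := by omega
    rw [h1, h2, Nat.choose_succ_succ]
    simp only [Nat.succ_eq_add_one]
    congr 2
    omega
  have ha1 : 1 ≤ a := Nat.choose_pos (by omega)
  have hb1 : 1 ≤ b := Nat.choose_pos (by omega)
  have hx : 2 ^ (n - 2) = 2 * 2 ^ (n - 3) := by
    have : n - 2 = (n - 3) + 1 := by omega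
    rw [this, pow_succ]
    ring
  rw [hab, hx]
  have hsum : (a + b) + (a - 1) + (b - 1) = ((a + b) - 1) * 2 := by omega
  calc (a-1) * 2^(n-3) + (a+b) * 2^(n-3) + (b-1) * 2^(n-3)
      = ((a + b) + (a - 1) + (b - 1)) * 2^(n-3) := by ring
    _ = (((a+b) - 1) * 2) * 2^(n-3) := by rw [hsum]
    _ = ((a+b) - 1) * (2 * 2^(n-3)) := by ring

/-! Bridge to signed permutations -/

def sgnVal {n : ℕ} (δ : Fin n → Bool) (v : Fin n) : ℤ :=
  (if δ v then (-1 : ℤ) else 1) * (((v : ℕ) : ℤ) + 1)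

lemma natAbs_sgnVal {n : ℕ} (δ : Fin n → Bool) (v : Fin n) :
    (sgnVal δ v).natAbs = (v : ℕ) + 1 := by
  unfold sgnVal
  split <;> simp [Int.natAbs_mul] <;> omega

lemma sgnVal_injective {n : ℕ} (δ : Fin n → Bool) : Function.Injective (sgnVal δ) := by
  intro a b h
  have := congrArg Int.natAbs h
  rw [natAbs_sgnVal, natAbs_sgnVal] at this
  exact Fin.ext (by omega)

lemma sgnVal_neg_iff {n : ℕ} (δ : Fin n → Bool) (v : Fin n) :
    sgnVal δ v < 0 ↔ δ v := by
  unfold sgnVal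
  rcases Bool.eq_false_or_eq_true (δ v) with h | h <;> rw [h] <;> simp <;> omega

def Vset {n : ℕ} (δ : Fin n → Bool) : Finset ℤ := Finset.univ.image (sgnVal δ)

lemma card_Vset {n : ℕ} (δ : Fin n → Bool) : (Vset δ).card = n := by
  rw [Vset, Finset.card_image_of_injective _ (sgnVal_injective δ), Finset.card_univ,
    Fintype.card_fin]

def wordOf (n : ℕ) (π : Equiv.Perm (Fin n) × (Fin n → Bool)) : List ℤ :=
  List.ofFn fun i => (if π.2 i then (-1 : ℤ) else 1) * (((π.1 i : ℕ) : ℤ) + 1)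

lemma length_wordOf (n : ℕ) (π : Equiv.Perm (Fin n) × (Fin n → Bool)) :
    (wordOf n π).length = n := by simp [wordOf]

lemma getD_wordOf (n : ℕ) (π : Equiv.Perm (Fin n) × (Fin n → Bool)) (i : ℕ) (h : i < n) :
    (wordOf n π).getD i 0
      = (if π.2 ⟨i, h⟩ then (-1 : ℤ) else 1) * (((π.1 ⟨i, h⟩ : ℕ) : ℤ) + 1) := by
  rw [List.getD_eq_getElem _ _ (by rw [length_wordOf]; exact h)]
  simp [wordOf]

def δof {n : ℕ} (π : Equiv.Perm (Fin n) × (Fin n → Bool)) : Fin n → Bool :=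
  fun v => π.2 (π.1⁻¹ v)

lemma wordOf_eq_ofFn_sgnVal {n : ℕ} (π : Equiv.Perm (Fin n) × (Fin n → Bool)) :
    wordOf n π = List.ofFn fun i => sgnVal (δof π) (π.1 i) := by
  unfold wordOf sgnVal δof
  congr 1
  funext i
  rw [show π.1⁻¹ (π.1 i) = i from π.1.symm_apply_apply i]

lemma wordOf_mem_permsF {n : ℕ} (π : Equiv.Perm (Fin n) × (Fin n → Bool)) :
    wordOf n π ∈ permsF (Vset (δof π)) := by
  rw [mem_permsF', wordOf_eq_ofFn_sgnVal]
  constructor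
  · rw [List.nodup_ofFn]
    exact (sgnVal_injective (δof π)).comp π.1.injective
  · ext x
    rw [List.mem_toFinset, List.mem_ofFn, Vset]
    simp only [Finset.mem_image, Finset.mem_univ, true_and, Set.mem_range]
    constructor
    · rintro ⟨i, hi⟩
      exact ⟨π.1 i, hi⟩
    · rintro ⟨v, hv⟩
      exact ⟨π.1⁻¹ v, by rw [show π.1 (π.1⁻¹ v) = v from π.1.apply_symm_apply v]; exact hv⟩

lemma bPeakSet_eq_peaks (n : ℕ) (π : Equiv.Perm (Fin n) × (Fin n → Bool)) :
    bPeakSet n π = peaks (wordOf n π) := by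
  unfold bPeakSet peaks
  rw [length_wordOf]
  apply Finset.filter_congr
  intro i hi
  rw [Finset.mem_Icc] at hi
  obtain ⟨hi2, hin⟩ := hi
  have hn : 3 ≤ n := by omega
  have hbv : ∀ k : ℕ, 1 ≤ k → k ≤ n → bval n π k = (wordOf n π).getD (k - 1) 0 := by
    intro k h1 h2
    have hk : k - 1 < n := by omega
    rw [getD_wordOf n π (k-1) hk, bval, dif_pos hk]
  rw [hbv (i-1) (by omega) (by omega), hbv i (by omega) (by omega),
    hbv (i+1) (by omega) (by omega)]
  have e1 : i - 1 - 1 = i - 2 := by omega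
  have e2 : i + 1 - 1 = i := by omega
  rw [e1, e2]

lemma wordOf_injective (n : ℕ) : Function.Injective (wordOf n) := by
  intro π π' h
  rw [wordOf, wordOf, List.ofFn_inj] at h
  have key : ∀ i, π.1 i = π'.1 i ∧ π.2 i = π'.2 i := by
    intro i
    have hi := congrFun h i
    rcases Bool.eq_false_or_eq_true (π.2 i) with h2 | h2 <;>
      rcases Bool.eq_false_or_eq_true (π'.2 i) with h2' | h2' <;>
      rw [h2, h2'] at hi <;> simp at hi <;>
      first
        | exact absurd hi (by omega)
        | exact ⟨Fin.ext (by omega), by rw [h2, h2']⟩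
  have h1 : π.1 = π'.1 := Equiv.ext fun i => (key i).1
  have h2 : π.2 = π'.2 := funext fun i => (key i).2
  exact Prod.ext h1 h2

end Stmt6

open Stmt6 in
theorem stmt6' (n m : ℕ) (h2 : 2 ≤ m) (hm : m ≤ n - 1) :
    (Finset.univ.filter fun π : Equiv.Perm (Fin n) × (Fin n → Bool) =>
      bPeakSet n π = {m}).card = (Nat.choose (n - 1) (m - 1) - 1) * 2 ^ (2 * n - 2) := by
  classical
  have hn3 : 3 ≤ n := by omega
  have key : (Finset.univ.filter fun π : Equiv.Perm (Fin n) × (Fin n → Bool) =>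
        bPeakSet n π = {m}).card
      = ((Finset.univ : Finset (Fin n → Bool)).sigma fun δ =>
          (permsF (Vset δ)).filter fun l => peaks l = {m}).card := by
    refine Finset.card_bij (fun π _ => ⟨δof π, wordOf n π⟩) ?_ ?_ ?_
    · intro π hπ
      rw [Finset.mem_filter] at hπ
      refine Finset.mem_sigma.2 ⟨Finset.mem_univ _, Finset.mem_filter.2
        ⟨wordOf_mem_permsF π, ?_⟩⟩
      rw [← bPeakSet_eq_peaks]
      exact hπ.2
    · intro a _ b _ h
      have hsnd := congrArg (fun s : Σ _ : Fin n → Bool, List ℤ => s.2) h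
      exact wordOf_injective n hsnd
    · rintro ⟨δ, l⟩ hb
      rw [Finset.mem_sigma, Finset.mem_filter] at hb
      obtain ⟨-, hl, hpk⟩ := hb
      have hlen : l.length = n := by rw [length_mem_permsF hl, card_Vset]
      have hval : ∀ i : Fin n, ∃ v : Fin n, l.getD (i : ℕ) 0 = sgnVal δ v := by
        intro i
        have h1 : (i : ℕ) < l.length := by rw [hlen]; exact i.isLt
        have h2' := mem_of_mem_permsF hl (getD_mem' h1)
        rw [Vset] at h2'
        simp only [Finset.mem_image, Finset.mem_univ, true_and] at h2'
        obtain ⟨v, hv⟩ := h2'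
        exact ⟨v, hv.symm⟩
      choose g hg using hval
      have hnd := (mem_permsF'.1 hl).1
      have ginj : Function.Injective g := by
        intro i j hij
        have hgd : l.getD (i : ℕ) 0 = l.getD (j : ℕ) 0 := by rw [hg i, hg j, hij]
        have hi1 : (i : ℕ) < l.length := by rw [hlen]; exact i.isLt
        have hj1 : (j : ℕ) < l.length := by rw [hlen]; exact j.isLt
        rw [List.getD_eq_getElem _ _ hi1, List.getD_eq_getElem _ _ hj1] at hgd
        exact Fin.ext ((List.Nodup.getElem_inj_iff hnd).1 hgd)
      have gbij := Finite.injective_iff_bijective.1 ginj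
      set σ := Equiv.ofBijective g gbij with hσdef
      set ε : Fin n → Bool := fun i => δ (g i) with hεdef
      have hσ : ∀ i, σ i = g i := fun i => rfl
      have hw : wordOf n (σ, ε) = l := by
        apply List.ext_getElem (by rw [length_wordOf, hlen])
        intro k hk1 hk2
        have hkn : k < n := by rw [← hlen]; exact hk2
        have e1 : (wordOf n (σ, ε))[k] = (wordOf n (σ, ε)).getD k 0 :=
          (List.getD_eq_getElem _ _ hk1).symm
        have e2 : l[k] = l.getD k 0 := (List.getD_eq_getElem _ _ hk2).symm
        rw [e1, e2, getD_wordOf n (σ, ε) k hkn]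
        have hgd : l.getD k 0 = sgnVal δ (g ⟨k, hkn⟩) := by
          have := hg ⟨k, hkn⟩
          simpa using this
        rw [hgd]
        rfl
      have hδ : δof (σ, ε) = δ := by
        funext v
        show ε (σ⁻¹ v) = δ v
        rw [hεdef]
        show δ (g (σ⁻¹ v)) = δ v
        have : g (σ⁻¹ v) = σ (σ⁻¹ v) := (hσ _).symm
        rw [this, show σ (σ⁻¹ v) = v from σ.apply_symm_apply v]
      refine ⟨(σ, ε), Finset.mem_filter.2 ⟨Finset.mem_univ _, ?_⟩, ?_⟩
      · rw [bPeakSet_eq_peaks, hw]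
        exact hpk
      · show (⟨δof (σ, ε), wordOf n (σ, ε)⟩ : Σ _ : Fin n → Bool, List ℤ) = ⟨δ, l⟩
        rw [hδ, hw]
  rw [key, Finset.card_sigma]
  have hterm : ∀ δ ∈ (Finset.univ : Finset (Fin n → Bool)),
      ((permsF (Vset δ)).filter fun l => peaks l = {m}).card
        = (Nat.choose (n-1) (m-1) - 1) * 2 ^ (n - 2) := fun δ _ =>
    card_peak_singleton n (Vset δ) (card_Vset δ) m h2 hm
  rw [Finset.sum_congr rfl hterm, Finset.sum_const, smul_eq_mul, Finset.card_univ]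
  have hcard : Fintype.card (Fin n → Bool) = 2 ^ n := by
    simp [Fintype.card_fun]
  rw [hcard]
  have harr : 2 ^ n * ((Nat.choose (n-1) (m-1) - 1) * 2 ^ (n - 2))
      = (Nat.choose (n-1) (m-1) - 1) * (2 ^ n * 2 ^ (n - 2)) := by ring
  rw [harr, ← pow_add]
  congr 2
  omega


/-- `#P_B({m},n) = (C(n-1,m-1) - 1)·2^(2n-2)`. -/
theorem stmt6 (n m : ℕ) (h2 : 2 ≤ m) (hm : m ≤ n - 1) :
    PB n {m} = (Nat.choose (n - 1) (m - 1) - 1) * 2 ^ (2 * n - 2) := by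
  rw [PB]
  exact stmt6' n m h2 hm
end

section
/- If S = {2,m} is admissible (4 ≤ m ≤ n-1), then the number of signed permutations in B_n with peak set {2,m} equals [(m-3)·C(n-2,m-1) + (m-2)·C(n-2,m-2) - (n-2)]·2^{2n-3}. -/
open Finset

namespace Stmt7

set_option maxHeartbeats 1000000

/-- `x` is a (1-indexed) peak position of the word `w`. -/
def IsPk {α : Type*} [LinearOrder α] {k : ℕ} (w : Fin k → α) (x : ℕ) : Prop :=
  ∃ h : x < k, 2 ≤ x ∧ w ⟨x - 2, by omega⟩ < w ⟨x - 1, by omega⟩ ∧ w ⟨x, h⟩ < w ⟨x - 1, by omega⟩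

/-- peak set of a word -/
def wpk {α : Type*} [LinearOrder α] {k : ℕ} (w : Fin k → α) : Finset ℕ :=
  (Finset.Icc 2 (k - 1)).filter fun x =>
    if h : x < k then
      2 ≤ x ∧ w ⟨x - 2, by omega⟩ < w ⟨x - 1, by omega⟩ ∧ w ⟨x, h⟩ < w ⟨x - 1, by omega⟩
    else False

lemma mem_wpk {α : Type*} [LinearOrder α] {k : ℕ} (w : Fin k → α) (x : ℕ) :
    x ∈ wpk w ↔ IsPk w x := by
  unfold wpk IsPk
  rcases Nat.lt_or_ge x k with h | h
  · rw [Finset.mem_filter, dif_pos h, Finset.mem_Icc]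
    constructor
    · rintro ⟨-, h2, ha, hb⟩; exact ⟨h, h2, ha, hb⟩
    · rintro ⟨h', h2, ha, hb⟩; exact ⟨⟨h2, by omega⟩, h2, ha, hb⟩
  · rw [Finset.mem_filter, dif_neg (by omega)]
    simp only [and_false, false_iff]
    rintro ⟨h', -⟩; omega

lemma wpk_mem_range {α : Type*} [LinearOrder α] {k : ℕ} {w : Fin k → α} {x : ℕ}
    (hx : x ∈ wpk w) : 2 ≤ x ∧ x < k := by
  rw [mem_wpk] at hx; obtain ⟨h, h2, -⟩ := hx; exact ⟨h2, h⟩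

lemma sval_lt_sval {n : ℕ} (π : Equiv.Perm (Fin n)) {a b : ℕ} (ha : a - 1 < n) (hb : b - 1 < n) :
    sval n π a < sval n π b ↔ π ⟨a - 1, ha⟩ < π ⟨b - 1, hb⟩ := by
  unfold sval
  rw [dif_pos ha, dif_pos hb, Fin.lt_def]
  omega

lemma mem_sPeakSet {n : ℕ} (π : Equiv.Perm (Fin n)) (x : ℕ) :
    x ∈ sPeakSet n π ↔ IsPk (⇑π) x := by
  unfold sPeakSet IsPk
  rw [Finset.mem_filter, Finset.mem_Icc]
  constructor
  · rintro ⟨⟨h2, hk⟩, ha, hb⟩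
    have hx : x < n := by omega
    refine ⟨hx, h2, ?_, ?_⟩
    · have := (sval_lt_sval π (a := x - 1) (b := x) (by omega) (by omega)).mp ha
      simp only [show x - 1 - 1 = x - 2 from by omega] at this; exact this
    · have := (sval_lt_sval π (a := x + 1) (b := x) (by omega) (by omega)).mp hb
      simp only [show x + 1 - 1 = x from by omega] at this; exact this
  · rintro ⟨hx, h2, ha, hb⟩
    refine ⟨⟨h2, by omega⟩, ?_, ?_⟩
    · rw [sval_lt_sval π (by omega) (by omega)]
      simp only [show x - 1 - 1 = x - 2 from by omega]; exact ha
    · rw [sval_lt_sval π (by omega) (by omega)]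
      simp only [show x + 1 - 1 = x from by omega]; exact hb

lemma sPeakSet_eq_wpk {n : ℕ} (π : Equiv.Perm (Fin n)) : sPeakSet n π = wpk (⇑π) := by
  ext x; rw [mem_sPeakSet, mem_wpk]

/-- peak sets only depend on relative order -/
lemma wpk_congr {α β : Type*} [LinearOrder α] [LinearOrder β] {k : ℕ}
    {w : Fin k → α} {w' : Fin k → β} (h : ∀ i j, w i < w j ↔ w' i < w' j) :
    wpk w = wpk w' := by
  ext x
  rw [mem_wpk, mem_wpk]
  unfold IsPk
  constructor
  · rintro ⟨hx, h2, ha, hb⟩; exact ⟨hx, h2, (h _ _).mp ha, (h _ _).mp hb⟩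
  · rintro ⟨hx, h2, ha, hb⟩; exact ⟨hx, h2, (h _ _).mpr ha, (h _ _).mpr hb⟩

lemma perm_mk_congr {n : ℕ} (π : Equiv.Perm (Fin n)) {a b : ℕ} (h : a = b) {ha : a < n}
    {hb : b < n} : π ⟨a, ha⟩ = π ⟨b, hb⟩ := by subst h; rfl

lemma lt_top {n q : ℕ} (hq : q < n) (π : Equiv.Perm (Fin n))
    (hπ : π ⟨q, hq⟩ = ⟨n - 1, by omega⟩) {a : ℕ} (ha : a < n) (hne : a ≠ q) :
    π ⟨a, ha⟩ < π ⟨q, hq⟩ := by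
  have h1 : π ⟨a, ha⟩ ≠ π ⟨q, hq⟩ := by
    intro h
    exact hne (Fin.mk.injEq .. ▸ (π.injective h))
  rw [hπ] at h1 ⊢
  rw [Fin.lt_def]
  have h2 := (π ⟨a, ha⟩).2
  have h3 : (π ⟨a, ha⟩).1 ≠ n - 1 := fun hh => h1 (Fin.ext hh)
  simp only []
  omega

lemma not_top_lt {n q : ℕ} (hq : q < n) (π : Equiv.Perm (Fin n))
    (hπ : π ⟨q, hq⟩ = ⟨n - 1, by omega⟩) {a : ℕ} (ha : a < n) :
    ¬ π ⟨q, hq⟩ < π ⟨a, ha⟩ := by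
  rw [hπ, Fin.lt_def]
  have := (π ⟨a, ha⟩).2
  simp only []
  omega

lemma transport (n q : ℕ) (hq : q < n) (π : Equiv.Perm (Fin n))
    (hπ : π ⟨q, hq⟩ = ⟨n - 1, by omega⟩) :
    sPeakSet n π =
      (wpk (fun i : Fin q => π ⟨i.1, i.2.trans hq⟩) ∪
        (if 1 ≤ q ∧ q + 2 ≤ n then {q + 1} else ∅)) ∪
      (wpk (fun i : Fin (n - 1 - q) => π ⟨q + 1 + i.1, by have := i.2; omega⟩)).image
        (· + (q + 1)) := by
  ext x
  rw [mem_sPeakSet]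
  simp only [Finset.mem_union, mem_wpk, Finset.mem_image]
  constructor
  · rintro ⟨hx, h2, ha, hb⟩
    rcases lt_trichotomy x q with hlt | heq | hgt
    · exact Or.inl (Or.inl ⟨hlt, h2, ha, hb⟩)
    · exact absurd ((perm_mk_congr π heq.symm (ha := hq) (hb := hx)).trans_lt hb)
        (not_top_lt hq π hπ (by omega))
    · rcases Nat.lt_or_ge x (q + 2) with hx2 | hx2
      · refine Or.inl (Or.inr ?_)
        rw [if_pos ⟨by omega, by omega⟩, Finset.mem_singleton]
        omega
      · rcases Nat.lt_or_ge x (q + 3) with hx3 | hx3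
        · exact absurd ((perm_mk_congr π (show q = x - 2 by omega) (ha := hq)
            (hb := by omega)).trans_lt ha) (not_top_lt hq π hπ (by omega))
        · refine Or.inr ⟨x - (q + 1), ⟨by omega, by omega, ?_, ?_⟩, by omega⟩
          · show π ⟨q + 1 + (x - (q+1) - 2), by omega⟩ < π ⟨q + 1 + (x - (q+1) - 1), by omega⟩
            exact (perm_mk_congr π (show q + 1 + (x - (q+1) - 2) = x - 2 by omega)
                (ha := by omega) (hb := by omega)).trans_lt
              (ha.trans_eq (perm_mk_congr π (show x - 1 = q + 1 + (x - (q+1) - 1) by omega)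
                (ha := by omega) (hb := by omega)))
          · show π ⟨q + 1 + (x - (q+1)), by omega⟩ < π ⟨q + 1 + (x - (q+1) - 1), by omega⟩
            exact (perm_mk_congr π (show q + 1 + (x - (q+1)) = x by omega)
                (ha := by omega) (hb := hx)).trans_lt
              (hb.trans_eq (perm_mk_congr π (show x - 1 = q + 1 + (x - (q+1) - 1) by omega)
                (ha := by omega) (hb := by omega)))
  · rintro ((⟨hxq, h2, ha, hb⟩ | hM) | ⟨a, ⟨hak, ha2, hA, hB⟩, hax⟩)
    · exact ⟨hxq.trans hq, h2, ha, hb⟩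
    · rcases Decidable.em (1 ≤ q ∧ q + 2 ≤ n) with hc | hc
      · rw [if_pos hc, Finset.mem_singleton] at hM
        subst hM
        refine ⟨by omega, by omega, ?_, ?_⟩
        · exact lt_top hq π hπ (by omega) (by omega)
        · exact lt_top hq π hπ (by omega) (by omega)
      · rw [if_neg hc] at hM; exact absurd hM (Finset.notMem_empty x)
    · have hA' : π ⟨q + 1 + (a - 2), by clear hA hB; omega⟩
          < π ⟨q + 1 + (a - 1), by clear hA hB; omega⟩ := hA
      have hB' : π ⟨q + 1 + a, by clear hA hB; omega⟩
          < π ⟨q + 1 + (a - 1), by clear hA hB; omega⟩ := hB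
      clear hA hB
      subst hax
      refine ⟨by omega, by omega, ?_, ?_⟩
      · show π ⟨a + (q + 1) - 2, by omega⟩ < π ⟨a + (q + 1) - 1, by omega⟩
        exact (perm_mk_congr π (show a + (q+1) - 2 = q + 1 + (a - 2) by omega)
            (ha := by omega) (hb := by omega)).trans_lt
          (hA'.trans_eq (perm_mk_congr π (show q + 1 + (a - 1) = a + (q+1) - 1 by omega)
            (ha := by omega) (hb := by omega)))
      · show π ⟨a + (q + 1), by omega⟩ < π ⟨a + (q + 1) - 1, by omega⟩
        exact (perm_mk_congr π (show a + (q+1) = q + 1 + a by omega)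
            (ha := by omega) (hb := by omega)).trans_lt
          (hB'.trans_eq (perm_mk_congr π (show q + 1 + (a - 1) = a + (q+1) - 1 by omega)
            (ha := by omega) (hb := by omega)))

-- L1
lemma count_words (n k : ℕ) (V : Finset (Fin n)) (S : Finset ℕ) :
    ((univ : Finset (Fin k → Fin n)).filter fun w =>
        Function.Injective w ∧ (∀ i, w i ∈ V) ∧ wpk w = S).card
      = V.card.choose k * PP k S := by
  rw [Finset.card_eq_sum_card_fiberwise (f := fun w => Finset.univ.image w)
      (t := V.powersetCard k) (fun w hw => by
        rw [Finset.mem_coe, Finset.mem_filter] at hw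
        obtain ⟨-, hinj, hmem, -⟩ := hw
        rw [Finset.mem_coe, Finset.mem_powersetCard]
        refine ⟨fun x hx => ?_, ?_⟩
        · rw [Finset.mem_image] at hx
          obtain ⟨i, -, rfl⟩ := hx
          exact hmem i
        · rw [Finset.card_image_of_injective _ hinj, Finset.card_univ, Fintype.card_fin])]
  have hfib : ∀ T ∈ V.powersetCard k,
      (((univ : Finset (Fin k → Fin n)).filter fun w =>
          Function.Injective w ∧ (∀ i, w i ∈ V) ∧ wpk w = S).filter
        fun w => Finset.univ.image w = T).card = PP k S := by
    intro T hT
    rw [Finset.mem_powersetCard] at hT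
    obtain ⟨hTV, hTk⟩ := hT
    rw [PP]
    refine (Finset.card_bij
      (fun π _ => fun j : Fin k => ((T.orderIsoOfFin hTk (π j) : {x // x ∈ T}) : Fin n))
      ?_ ?_ ?_).symm
    · -- maps to
      intro π hπ
      rw [Finset.mem_filter] at hπ
      obtain ⟨-, hπS⟩ := hπ
      have hinj : Function.Injective
          (fun j : Fin k => ((T.orderIsoOfFin hTk (π j) : {x // x ∈ T}) : Fin n)) := by
        intro a b h
        exact π.injective ((T.orderIsoOfFin hTk).injective (Subtype.coe_injective h))
      rw [Finset.mem_filter, Finset.mem_filter]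
      refine ⟨⟨Finset.mem_univ _, hinj, fun i => hTV (T.orderIsoOfFin hTk (π i)).2, ?_⟩, ?_⟩
      · rw [wpk_congr (w' := ⇑π) fun i j => ?_, ← sPeakSet_eq_wpk, hπS]
        simp only [Subtype.coe_lt_coe, OrderIso.lt_iff_lt]
      · ext x
        rw [Finset.mem_image]
        constructor
        · rintro ⟨j, -, rfl⟩
          exact (T.orderIsoOfFin hTk (π j)).2
        · intro hx
          refine ⟨π.symm ((T.orderIsoOfFin hTk).symm ⟨x, hx⟩), Finset.mem_univ _, ?_⟩
          simp
    · -- injective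
      intro π1 h1 π2 h2 h
      apply Equiv.ext
      intro j
      have hj := congrFun h j
      exact (T.orderIsoOfFin hTk).injective (Subtype.coe_injective hj)
    · -- surjective
      intro w hw
      rw [Finset.mem_filter, Finset.mem_filter] at hw
      obtain ⟨⟨-, hinj, hmem, hwS⟩, himg⟩ := hw
      have hval : ∀ j, w j ∈ T := fun j => himg ▸ Finset.mem_image_of_mem w (Finset.mem_univ j)
      have heinj : Function.Injective
          (fun j : Fin k => (T.orderIsoOfFin hTk).symm ⟨w j, hval j⟩) := by
        intro a b hab
        exact hinj (congrArg Subtype.val ((T.orderIsoOfFin hTk).symm.injective hab))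
      refine ⟨Equiv.ofBijective _ (Finite.injective_iff_bijective.mp heinj), ?_, ?_⟩
      · rw [Finset.mem_filter]
        refine ⟨Finset.mem_univ _, ?_⟩
        rw [sPeakSet_eq_wpk, wpk_congr (w' := w) fun i j => ?_]
        · exact hwS
        · show (T.orderIsoOfFin hTk).symm ⟨w i, hval i⟩ < (T.orderIsoOfFin hTk).symm ⟨w j, hval j⟩
            ↔ w i < w j
          rw [OrderIso.lt_iff_lt, Subtype.mk_lt_mk]
      · funext j
        show ((T.orderIsoOfFin hTk ((T.orderIsoOfFin hTk).symm ⟨w j, hval j⟩) :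
          {x // x ∈ T}) : Fin n) = w j
        rw [OrderIso.apply_symm_apply]
  rw [Finset.sum_congr rfl hfib, Finset.sum_const, Finset.card_powersetCard, smul_eq_mul]

lemma fun_mk_congr {α : Type*} {k : ℕ} (w : Fin k → α) {a b : ℕ} (h : a = b) {ha : a < k}
    {hb : b < k} : w ⟨a, ha⟩ = w ⟨b, hb⟩ := by subst h; rfl



lemma decomp_inj {q : ℕ} {A A' B B' M : Finset ℕ} (hA : ∀ x ∈ A, x < q) (hA' : ∀ x ∈ A', x < q)
    (hB : ∀ x ∈ B, 2 ≤ x) (hB' : ∀ x ∈ B', 2 ≤ x) (hM : ∀ x ∈ M, x = q + 1) :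
    ((A ∪ M) ∪ B.image (· + (q + 1)) = (A' ∪ M) ∪ B'.image (· + (q + 1))) ↔
      A = A' ∧ B = B' := by
  constructor
  · intro h
    constructor
    · ext x
      constructor
      · intro hx
        have : x ∈ (A' ∪ M) ∪ B'.image (· + (q + 1)) := h ▸ (by
          exact Finset.mem_union_left _ (Finset.mem_union_left _ hx))
        rcases Finset.mem_union.mp this with h' | h'
        · rcases Finset.mem_union.mp h' with h'' | h''
          · exact h''
          · exact absurd (hM x h'') (by have := hA x hx; omega)
        · obtain ⟨b, hb, hbx⟩ := Finset.mem_image.mp h'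
          exact absurd hbx (by have := hA x hx; have := hB' b hb; omega)
      · intro hx
        have : x ∈ (A ∪ M) ∪ B.image (· + (q + 1)) := h ▸ (by
          exact Finset.mem_union_left _ (Finset.mem_union_left _ hx))
        rcases Finset.mem_union.mp this with h' | h'
        · rcases Finset.mem_union.mp h' with h'' | h''
          · exact h''
          · exact absurd (hM x h'') (by have := hA' x hx; omega)
        · obtain ⟨b, hb, hbx⟩ := Finset.mem_image.mp h'
          exact absurd hbx (by have := hA' x hx; have := hB b hb; omega)
    · ext b
      constructor
      · intro hb
        have : b + (q + 1) ∈ (A' ∪ M) ∪ B'.image (· + (q + 1)) := h ▸ (by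
          exact Finset.mem_union_right _ (Finset.mem_image_of_mem _ hb))
        rcases Finset.mem_union.mp this with h' | h'
        · rcases Finset.mem_union.mp h' with h'' | h''
          · exact absurd (hA' _ h'') (by omega)
          · exact absurd (hM _ h'') (by have := hB b hb; omega)
        · obtain ⟨b', hb', hbx⟩ := Finset.mem_image.mp h'
          have : b' = b := by omega
          exact this ▸ hb'
      · intro hb
        have : b + (q + 1) ∈ (A ∪ M) ∪ B.image (· + (q + 1)) := h ▸ (by
          exact Finset.mem_union_right _ (Finset.mem_image_of_mem _ hb))
        rcases Finset.mem_union.mp this with h' | h'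
        · rcases Finset.mem_union.mp h' with h'' | h''
          · exact absurd (hA _ h'') (by omega)
          · exact absurd (hM _ h'') (by have := hB' b hb; omega)
        · obtain ⟨b', hb', hbx⟩ := Finset.mem_image.mp h'
          have : b' = b := by omega
          exact this ▸ hb'
  · rintro ⟨rfl, rfl⟩; rfl

lemma count_split (n q : ℕ) (hq : q < n) (S1 S2 : Finset ℕ)
    (hS1 : ∀ x ∈ S1, x < q) (hS2 : ∀ x ∈ S2, 2 ≤ x) :
    ((univ : Finset (Equiv.Perm (Fin n))).filter fun π =>
        π ⟨q, hq⟩ = ⟨n - 1, by omega⟩ ∧ sPeakSet n π =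
          (S1 ∪ (if 1 ≤ q ∧ q + 2 ≤ n then {q + 1} else ∅)) ∪ S2.image (· + (q + 1))).card
      = (n - 1).choose q * (PP q S1 * PP (n - 1 - q) S2) := by
  have htp : (n : ℕ) - 1 < n := by omega
  set tp : Fin n := ⟨n - 1, htp⟩ with htpdef
  -- Step 1: rewrite the filtering condition
  have hcond : ∀ π : Equiv.Perm (Fin n),
      (π ⟨q, hq⟩ = tp ∧ sPeakSet n π =
        (S1 ∪ (if 1 ≤ q ∧ q + 2 ≤ n then {q + 1} else ∅)) ∪ S2.image (· + (q + 1))) ↔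
      (π ⟨q, hq⟩ = tp ∧ wpk (fun i : Fin q => π ⟨i.1, i.2.trans hq⟩) = S1 ∧
        wpk (fun i : Fin (n - 1 - q) => π ⟨q + 1 + i.1, by have := i.2; omega⟩) = S2) := by
    intro π
    constructor
    · rintro ⟨hπ, hS⟩
      rw [transport n q hq π hπ] at hS
      exact ⟨hπ, (decomp_inj (fun x hx => (wpk_mem_range hx).2) hS1
        (fun x hx => (wpk_mem_range hx).1) hS2
        (fun x hx => by split at hx
                        · exact Finset.mem_singleton.mp hx
                        · exact absurd hx (Finset.notMem_empty x))).mp hS⟩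
    · rintro ⟨hπ, h1, h2⟩
      refine ⟨hπ, ?_⟩
      rw [transport n q hq π hπ, h1, h2]
  have hfc : ((univ : Finset (Equiv.Perm (Fin n))).filter fun π =>
        π ⟨q, hq⟩ = tp ∧ sPeakSet n π =
          (S1 ∪ (if 1 ≤ q ∧ q + 2 ≤ n then {q + 1} else ∅)) ∪ S2.image (· + (q + 1)))
      = (univ.filter fun π : Equiv.Perm (Fin n) =>
        π ⟨q, hq⟩ = tp ∧ wpk (fun i : Fin q => π ⟨i.1, i.2.trans hq⟩) = S1 ∧
        wpk (fun i : Fin (n - 1 - q) => π ⟨q + 1 + i.1, by have := i.2; omega⟩) = S2) := by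
    apply Finset.filter_congr
    intro π _
    exact (hcond π)
  rw [hfc]
  -- Step 2: bijection with pairs of words
  have hbij : (univ.filter fun π : Equiv.Perm (Fin n) =>
        π ⟨q, hq⟩ = tp ∧ wpk (fun i : Fin q => π ⟨i.1, i.2.trans hq⟩) = S1 ∧
        wpk (fun i : Fin (n - 1 - q) => π ⟨q + 1 + i.1, by have := i.2; omega⟩) = S2).card
      = ((univ : Finset ((Fin q → Fin n) × (Fin (n - 1 - q) → Fin n))).filter fun wp =>
          (Function.Injective wp.1 ∧ (∀ i, wp.1 i ∈ univ.erase tp) ∧ wpk wp.1 = S1) ∧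
          (Function.Injective wp.2 ∧ (∀ i, wp.2 i ∈ (univ.erase tp) \ univ.image wp.1) ∧
            wpk wp.2 = S2)).card := by
    refine Finset.card_bij (fun π _ =>
      ((fun i : Fin q => π ⟨i.1, i.2.trans hq⟩),
       (fun i : Fin (n - 1 - q) => π ⟨q + 1 + i.1, by have := i.2; omega⟩))) ?_ ?_ ?_
    · -- maps to
      intro π hπ
      rw [Finset.mem_filter] at hπ
      obtain ⟨-, htop, h1, h2⟩ := hπ
      rw [Finset.mem_filter]
      refine ⟨Finset.mem_univ _, ⟨?_, ?_, h1⟩, ?_, ?_, h2⟩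
      · intro a b hab
        have h' := π.injective hab
        rw [Fin.mk.injEq] at h'
        exact Fin.ext h'
      · intro i
        rw [Finset.mem_erase]
        refine ⟨fun h => ?_, Finset.mem_univ _⟩
        have := congrArg Fin.val (π.injective (h.trans htop.symm))
        simp only [] at this
        omega
      · intro a b hab
        have := congrArg Fin.val (π.injective hab)
        simp only [] at this
        exact Fin.ext (by omega)
      · intro i
        rw [Finset.mem_sdiff, Finset.mem_erase]
        refine ⟨⟨fun h => ?_, Finset.mem_univ _⟩, fun h => ?_⟩
        · have := congrArg Fin.val (π.injective (h.trans htop.symm))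
          simp only [] at this
          omega
        · obtain ⟨j, -, hj⟩ := Finset.mem_image.mp h
          have := congrArg Fin.val (π.injective hj)
          simp only [] at this
          have := j.2
          omega
    · -- injective
      intro π1 h1 π2 h2 h
      have hfst := congrArg Prod.fst h
      have hsnd := congrArg Prod.snd h
      simp only [] at hfst hsnd
      rw [Finset.mem_filter] at h1 h2
      apply Equiv.ext
      intro i
      rcases lt_trichotomy i.1 q with hlt | heq | hgt
      · exact congrFun hfst ⟨i.1, hlt⟩
      · have e1 : i = ⟨q, hq⟩ := Fin.ext heq
        rw [e1, h1.2.1, h2.2.1]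
      · have hb : i.1 - (q + 1) < n - 1 - q := by have := i.2; omega
        have e1 : π1 i = π1 ⟨q + 1 + (i.1 - (q + 1)), by have := i.2; omega⟩ :=
          fun_mk_congr (⇑π1) (by omega) (ha := i.2)
        have e2 : π2 i = π2 ⟨q + 1 + (i.1 - (q + 1)), by have := i.2; omega⟩ :=
          fun_mk_congr (⇑π2) (by omega) (ha := i.2)
        rw [e1, e2]
        exact congrFun hsnd ⟨i.1 - (q + 1), hb⟩
    · -- surjective
      rintro ⟨u1, u2⟩ hu
      rw [Finset.mem_filter] at hu
      obtain ⟨-, ⟨hinj1, hmem1, hwpk1⟩, hinj2, hmem2, hwpk2⟩ := hu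
      have hu1t : ∀ i, u1 i ≠ tp := fun i => (Finset.mem_erase.mp (hmem1 i)).1
      have hu2t : ∀ i, u2 i ≠ tp := fun i =>
        (Finset.mem_erase.mp (Finset.mem_sdiff.mp (hmem2 i)).1).1
      have hu12 : ∀ i j, u1 i ≠ u2 j := by
        intro i j h
        apply (Finset.mem_sdiff.mp (hmem2 j)).2
        show u2 j ∈ Finset.image u1 Finset.univ
        rw [← h]
        exact Finset.mem_image_of_mem u1 (Finset.mem_univ i)
      set g : Fin n → Fin n := fun i =>
        if h : i.1 < q then u1 ⟨i.1, h⟩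
        else if h2 : i.1 = q then tp
        else u2 ⟨i.1 - (q + 1), by have h3 := i.2; omega⟩ with hgdef
      have hg1 : ∀ (i : ℕ) (h : i < q), g ⟨i, h.trans hq⟩ = u1 ⟨i, h⟩ := by
        intro i h
        simp only [hgdef, dif_pos h]
      have hgq : g ⟨q, hq⟩ = tp := by
        simp [hgdef]
      have hg2 : ∀ (i : ℕ) (h : i < n - 1 - q), g ⟨q + 1 + i, by omega⟩ = u2 ⟨i, h⟩ := by
        intro i h
        have e1 : ¬ (q + 1 + i < q) := by omega
        have e2 : ¬ (q + 1 + i = q) := by omega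
        simp only [hgdef, dif_neg e1, dif_neg e2]
        exact fun_mk_congr u2 (by omega)
      have hginj : Function.Injective g := by
        intro a b hab
        rcases lt_trichotomy a.1 q with ha | ha | ha <;>
          rcases lt_trichotomy b.1 q with hb | hb | hb
        · -- both in prefix
          have e : u1 ⟨a.1, ha⟩ = u1 ⟨b.1, hb⟩ := ((hg1 a.1 ha).symm.trans hab).trans (hg1 b.1 hb)
          have h' := hinj1 e
          rw [Fin.mk.injEq] at h'
          exact Fin.ext h'
        · exact absurd (((hg1 a.1 ha).symm.trans hab).trans
            ((fun_mk_congr g (show b.1 = q by omega) (ha := b.2)).trans hgq)) (hu1t _)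
        · have hb' : b.1 - (q + 1) < n - 1 - q := by have := b.2; omega
          have eb : g b = u2 ⟨b.1 - (q + 1), hb'⟩ :=
            (fun_mk_congr g (show b.1 = q + 1 + (b.1 - (q + 1)) by omega) (ha := b.2)
              (hb := by omega)).trans (hg2 _ hb')
          exact absurd (((hg1 a.1 ha).symm.trans hab).trans eb) (hu12 _ _)
        · exact absurd ((((fun_mk_congr g (show a.1 = q by omega) (ha := a.2)).trans
            hgq).symm.trans hab).trans (hg1 b.1 hb)).symm (hu1t _)
        · exact Fin.ext (by omega)
        · have hb' : b.1 - (q + 1) < n - 1 - q := by have := b.2; omega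
          have eb : g b = u2 ⟨b.1 - (q + 1), hb'⟩ :=
            (fun_mk_congr g (show b.1 = q + 1 + (b.1 - (q + 1)) by omega) (ha := b.2)
              (hb := by omega)).trans (hg2 _ hb')
          exact absurd ((((fun_mk_congr g (show a.1 = q by omega) (ha := a.2)).trans
            hgq).symm.trans hab).trans eb).symm (hu2t _)
        · have ha' : a.1 - (q + 1) < n - 1 - q := by have := a.2; omega
          have ea : g a = u2 ⟨a.1 - (q + 1), ha'⟩ :=
            (fun_mk_congr g (show a.1 = q + 1 + (a.1 - (q + 1)) by omega) (ha := a.2)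
              (hb := by omega)).trans (hg2 _ ha')
          exact absurd ((ea.symm.trans hab).trans (hg1 b.1 hb)).symm (hu12 _ _)
        · have ha' : a.1 - (q + 1) < n - 1 - q := by have := a.2; omega
          have ea : g a = u2 ⟨a.1 - (q + 1), ha'⟩ :=
            (fun_mk_congr g (show a.1 = q + 1 + (a.1 - (q + 1)) by omega) (ha := a.2)
              (hb := by omega)).trans (hg2 _ ha')
          exact absurd (ea.symm.trans (hab.trans ((fun_mk_congr g (show b.1 = q by omega)
            (ha := b.2)).trans hgq))) (hu2t _)
        · have ha' : a.1 - (q + 1) < n - 1 - q := by have := a.2; omega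
          have hb' : b.1 - (q + 1) < n - 1 - q := by have := b.2; omega
          have ea : g a = u2 ⟨a.1 - (q + 1), ha'⟩ :=
            (fun_mk_congr g (show a.1 = q + 1 + (a.1 - (q + 1)) by omega) (ha := a.2)
              (hb := by omega)).trans (hg2 _ ha')
          have eb : g b = u2 ⟨b.1 - (q + 1), hb'⟩ :=
            (fun_mk_congr g (show b.1 = q + 1 + (b.1 - (q + 1)) by omega) (ha := b.2)
              (hb := by omega)).trans (hg2 _ hb')
          have := congrArg Fin.val (hinj2 ((ea.symm.trans hab).trans eb))
          simp only [] at this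
          exact Fin.ext (by omega)
      set π : Equiv.Perm (Fin n) := Equiv.ofBijective g
        (Finite.injective_iff_bijective.mp hginj) with hπdef
      have hπg : ∀ i, π i = g i := fun i => rfl
      have hw1 : (fun i : Fin q => π ⟨i.1, i.2.trans hq⟩) = u1 := by
        funext i
        exact (hπg _).trans (hg1 i.1 i.2)
      have hw2 : (fun i : Fin (n - 1 - q) => π ⟨q + 1 + i.1, by have := i.2; omega⟩) = u2 := by
        funext i
        exact (hπg _).trans (hg2 i.1 i.2)
      refine ⟨π, ?_, ?_⟩
      · rw [Finset.mem_filter]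
        exact ⟨Finset.mem_univ _, (hπg _).trans hgq, by rw [hw1]; exact hwpk1,
          by rw [hw2]; exact hwpk2⟩
      · rw [Prod.mk.injEq]
        exact ⟨hw1, hw2⟩
  rw [hbij]
  -- Step 3: count the pairs
  rw [Finset.card_eq_sum_card_fiberwise (f := Prod.fst)
      (t := univ.filter fun u1 : Fin q → Fin n =>
        Function.Injective u1 ∧ (∀ i, u1 i ∈ univ.erase tp) ∧ wpk u1 = S1)
      (fun wp hwp => by
        rw [Finset.mem_coe, Finset.mem_filter] at hwp ⊢
        exact ⟨Finset.mem_univ _, hwp.2.1⟩)]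
  have hVcard : (univ.erase tp).card = n - 1 := by
    rw [Finset.card_erase_of_mem (Finset.mem_univ _), Finset.card_univ, Fintype.card_fin]
  have hfib : ∀ u1 ∈ (univ.filter fun u1 : Fin q → Fin n =>
      Function.Injective u1 ∧ (∀ i, u1 i ∈ univ.erase tp) ∧ wpk u1 = S1),
      (((univ : Finset ((Fin q → Fin n) × (Fin (n - 1 - q) → Fin n))).filter fun wp =>
          (Function.Injective wp.1 ∧ (∀ i, wp.1 i ∈ univ.erase tp) ∧ wpk wp.1 = S1) ∧
          (Function.Injective wp.2 ∧ (∀ i, wp.2 i ∈ (univ.erase tp) \ univ.image wp.1) ∧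
            wpk wp.2 = S2)).filter fun wp => wp.1 = u1).card = PP (n - 1 - q) S2 := by
    intro u1 hu1
    rw [Finset.mem_filter] at hu1
    obtain ⟨-, hinj1, hmem1, hwpk1⟩ := hu1
    have himcard : (univ.image u1).card = q := by
      rw [Finset.card_image_of_injective _ hinj1, Finset.card_univ, Fintype.card_fin]
    have himsub : univ.image u1 ⊆ univ.erase tp := by
      intro x hx
      obtain ⟨i, -, rfl⟩ := Finset.mem_image.mp hx
      exact hmem1 i
    have hV2card : ((univ.erase tp) \ univ.image u1).card = n - 1 - q := by
      rw [Finset.card_sdiff_of_subset himsub, hVcard, himcard]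
    have := count_words n (n - 1 - q) ((univ.erase tp) \ univ.image u1) S2
    rw [hV2card, Nat.choose_self, one_mul] at this
    rw [← this]
    refine Finset.card_bij (fun wp _ => wp.2) ?_ ?_ ?_
    · intro wp hwp
      rw [Finset.mem_filter] at hwp ⊢
      obtain ⟨hwp1, hfst⟩ := hwp
      rw [Finset.mem_filter] at hwp1
      obtain ⟨-, -, hc2⟩ := hwp1
      rw [hfst] at hc2
      exact ⟨Finset.mem_univ _, hc2⟩
    · rintro ⟨a1, a2⟩ ha ⟨b1, b2⟩ hb h
      rw [Finset.mem_filter] at ha hb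
      simp only [] at h ha hb
      rw [Prod.mk.injEq]
      exact ⟨ha.2.trans hb.2.symm, h⟩
    · intro u2 hu2
      rw [Finset.mem_filter] at hu2
      obtain ⟨-, hc⟩ := hu2
      refine ⟨(u1, u2), ?_, rfl⟩
      rw [Finset.mem_filter, Finset.mem_filter]
      exact ⟨⟨Finset.mem_univ _, ⟨hinj1, hmem1, hwpk1⟩, hc⟩, rfl⟩
  rw [Finset.sum_congr rfl hfib, Finset.sum_const, smul_eq_mul]
  have hC := count_words n q (univ.erase tp) S1
  rw [hVcard] at hC
  rw [hC, mul_assoc]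

-- convenient form
lemma count_split' (n q : ℕ) (hq : q < n) (S S1 S2 : Finset ℕ)
    (hS1 : ∀ x ∈ S1, x < q) (hS2 : ∀ x ∈ S2, 2 ≤ x)
    (hS : S = (S1 ∪ (if 1 ≤ q ∧ q + 2 ≤ n then {q + 1} else ∅)) ∪ S2.image (· + (q + 1))) :
    ((univ : Finset (Equiv.Perm (Fin n))).filter fun π =>
        π ⟨q, hq⟩ = ⟨n - 1, by omega⟩ ∧ sPeakSet n π = S).card
      = (n - 1).choose q * (PP q S1 * PP (n - 1 - q) S2) := by
  subst hS
  exact count_split n q hq S1 S2 hS1 hS2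

lemma peak_bounds (n q : ℕ) (hq : q < n) (π : Equiv.Perm (Fin n))
    (hπ : π ⟨q, hq⟩ = ⟨n - 1, by omega⟩) :
    (∀ x ∈ sPeakSet n π, (x < q ∨ x = q + 1 ∨ q + 3 ≤ x) ∧ x < n) ∧
    ((1 ≤ q ∧ q + 2 ≤ n) → q + 1 ∈ sPeakSet n π) := by
  rw [transport n q hq π hπ]
  constructor
  · intro x hx
    rcases Finset.mem_union.mp hx with h | h
    · rcases Finset.mem_union.mp h with h | h
      · have := wpk_mem_range h
        omega
      · split at h
        · rw [Finset.mem_singleton] at h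
          omega
        · exact absurd h (Finset.notMem_empty x)
    · obtain ⟨b, hb, hbx⟩ := Finset.mem_image.mp h
      have := wpk_mem_range hb
      omega
  · intro hc
    refine Finset.mem_union_left _ (Finset.mem_union_right _ ?_)
    rw [if_pos hc]
    exact Finset.mem_singleton_self _

lemma count_zero (n q : ℕ) (hq : q < n) (S : Finset ℕ)
    (h : ∀ π : Equiv.Perm (Fin n), π ⟨q, hq⟩ = ⟨n - 1, by omega⟩ → sPeakSet n π ≠ S) :
    ((univ : Finset (Equiv.Perm (Fin n))).filter fun π =>
        π ⟨q, hq⟩ = ⟨n - 1, by omega⟩ ∧ sPeakSet n π = S).card = 0 := by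
  rw [Finset.card_eq_zero, Finset.filter_eq_empty_iff]
  rintro π - ⟨h1, h2⟩
  exact h π h1 h2

lemma PP_partition (n : ℕ) (hn : 1 ≤ n) (S : Finset ℕ) :
    PP n S = ∑ j : Fin n, ((univ : Finset (Equiv.Perm (Fin n))).filter fun π =>
      π j = ⟨n - 1, by omega⟩ ∧ sPeakSet n π = S).card := by
  rw [PP, Finset.card_eq_sum_card_fiberwise
    (f := fun π : Equiv.Perm (Fin n) => π.symm ⟨n - 1, by omega⟩) (t := univ)
    (fun _ _ => Finset.mem_univ _)]
  apply Finset.sum_congr rfl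
  intro j _
  rw [Finset.filter_filter]
  congr 1
  apply Finset.filter_congr
  intro π _
  constructor
  · rintro ⟨hS, hj⟩
    refine ⟨?_, hS⟩
    rw [← hj]
    exact π.apply_symm_apply _
  · rintro ⟨hj, hS⟩
    refine ⟨hS, ?_⟩
    rw [← hj]
    exact π.symm_apply_apply j

lemma sPeakSet_small {n : ℕ} (hn : n ≤ 2) (π : Equiv.Perm (Fin n)) : sPeakSet n π = ∅ := by
  unfold sPeakSet
  rw [show Finset.Icc 2 (n - 1) = ∅ from Finset.Icc_eq_empty (by omega), Finset.filter_empty]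

lemma PP_small {n : ℕ} (hn : n ≤ 2) : PP n ∅ = n.factorial := by
  rw [PP, Finset.filter_true_of_mem (fun π _ => sPeakSet_small hn π), Finset.card_univ]
  rw [Fintype.card_perm, Fintype.card_fin]

lemma PP_empty_step (n : ℕ) (hn : 2 ≤ n) : PP n ∅ = 2 * PP (n - 1) ∅ := by
  have key : ∀ j : Fin n,
      ((univ : Finset (Equiv.Perm (Fin n))).filter fun π =>
        π j = ⟨n - 1, by omega⟩ ∧ sPeakSet n π = ∅).card
      = (if j = (⟨0, by omega⟩ : Fin n) then PP (n - 1) ∅ else 0)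
        + (if j = (⟨n - 1, by omega⟩ : Fin n) then PP (n - 1) ∅ else 0) := by
    intro j
    by_cases hj0 : j = (⟨0, by omega⟩ : Fin n)
    · rw [if_pos hj0, if_neg (by rw [hj0]; intro h; rw [Fin.mk.injEq] at h; omega), hj0, add_zero]
      have hres := count_split' n 0 (by omega) ∅ ∅ ∅ (by simp) (by simp)
        (by rw [if_neg (by omega)]; simp)
      exact hres.trans (by rw [Nat.choose_zero_right, one_mul, PP_small (by omega),
        Nat.factorial_zero, one_mul, Nat.sub_zero])
    · by_cases hjn : j = (⟨n - 1, by omega⟩ : Fin n)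
      · rw [if_neg hj0, if_pos hjn, hjn, zero_add]
        have hres := count_split' n (n - 1) (by omega) ∅ ∅ ∅ (by simp) (by simp)
          (by rw [if_neg (by omega)]; simp)
        exact hres.trans (by rw [Nat.choose_self, one_mul,
          show n - 1 - (n - 1) = 0 by omega, PP_small (show (0:ℕ) ≤ 2 by omega),
          Nat.factorial_zero, mul_one])
      · rw [if_neg hj0, if_neg hjn, add_zero]
        have hq1 : 1 ≤ j.1 := by
          rcases Nat.eq_zero_or_pos j.1 with h | h
          · exact absurd (Fin.ext h) hj0
          · exact h
        have hq2 : j.1 + 2 ≤ n := by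
          have h1 : j.1 ≠ n - 1 := fun h => hjn (Fin.ext h)
          have := j.2
          omega
        apply count_zero
        intro π hπ hS
        have := (peak_bounds n j.1 j.2 π hπ).2 ⟨hq1, hq2⟩
        rw [hS] at this
        exact absurd this (Finset.notMem_empty _)
  rw [PP_partition n (by omega) ∅, Finset.sum_congr rfl (fun j _ => key j),
    Finset.sum_add_distrib, Finset.sum_ite_eq' univ, Finset.sum_ite_eq' univ,
    if_pos (Finset.mem_univ _), if_pos (Finset.mem_univ _)]
  omega

lemma PP_empty : ∀ n, 1 ≤ n → PP n ∅ = 2 ^ (n - 1) := by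
  intro n
  induction n using Nat.strong_induction_on with
  | _ n IH =>
    intro hn
    rcases Nat.lt_or_ge n 2 with h | h
    · have : n = 1 := by omega
      subst this
      rw [PP_small (by omega)]
      rfl
    · rw [PP_empty_step n h, IH (n - 1) (by omega) (by omega)]
      rw [← pow_succ']
      congr 1
      omega

lemma PP_single_step (k r : ℕ) (h2 : 2 ≤ r) (hk : r + 1 ≤ k) :
    PP k {r} = (if 3 ≤ r then PP (k - 1) {r - 1} else 0)
      + (k - 1).choose (r - 1) * (PP (r - 1) ∅ * PP (k - r) ∅)
      + (if r + 2 ≤ k then PP (k - 1) {r} else 0) := by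
  have h0k : 0 < k := by omega
  have hrk1 : r - 1 < k := by omega
  have hk1 : k - 1 < k := by omega
  have key : ∀ j : Fin k,
      ((univ : Finset (Equiv.Perm (Fin k))).filter fun π =>
        π j = ⟨k - 1, by omega⟩ ∧ sPeakSet k π = {r}).card
      = (if j = (⟨0, h0k⟩ : Fin k) then (if 3 ≤ r then PP (k - 1) {r - 1} else 0) else 0)
        + (if j = (⟨r - 1, hrk1⟩ : Fin k) then
            (k - 1).choose (r - 1) * (PP (r - 1) ∅ * PP (k - r) ∅) else 0)
        + (if j = (⟨k - 1, hk1⟩ : Fin k) then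
            (if r + 2 ≤ k then PP (k - 1) {r} else 0) else 0) := by
    intro j
    by_cases hj0 : j = (⟨0, h0k⟩ : Fin k)
    · rw [if_neg (show ¬ j = (⟨r - 1, hrk1⟩ : Fin k) by
          intro h; rw [hj0] at h; rw [Fin.mk.injEq] at h; omega),
        if_neg (show ¬ j = (⟨k - 1, hk1⟩ : Fin k) by
          intro h; rw [hj0] at h; rw [Fin.mk.injEq] at h; omega),
        add_zero, add_zero, if_pos hj0, hj0]
      by_cases hr3 : 3 ≤ r
      · rw [if_pos hr3]
        have hres := count_split' k 0 (by omega) {r} ∅ {r - 1} (by simp)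
          (by intro x hx; rw [Finset.mem_singleton] at hx; omega)
          (by rw [if_neg (by omega), Finset.union_empty, Finset.empty_union,
                Finset.image_singleton]
              congr 1
              omega)
        exact hres.trans (by rw [Nat.choose_zero_right, one_mul, PP_small (by omega),
          Nat.factorial_zero, one_mul, Nat.sub_zero])
      · rw [if_neg hr3]
        have hr2 : r = 2 := by omega
        apply count_zero
        intro π hπ hS
        have hb := ((peak_bounds k 0 (by omega) π hπ).1 r (by rw [hS]; exact Finset.mem_singleton_self r))
        omega
    · by_cases hjr : j = (⟨r - 1, hrk1⟩ : Fin k)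
      · rw [if_neg hj0,
          if_neg (show ¬ j = (⟨k - 1, hk1⟩ : Fin k) by
            intro h; rw [hjr] at h; rw [Fin.mk.injEq] at h; omega),
          zero_add, add_zero, if_pos hjr, hjr]
        have hres := count_split' k (r - 1) (by omega) {r} ∅ ∅ (by simp) (by simp)
          (by rw [if_pos ⟨by omega, by omega⟩, Finset.image_empty, Finset.union_empty,
                Finset.empty_union, show r - 1 + 1 = r by omega])
        exact hres.trans (by rw [show k - 1 - (r - 1) = k - r by omega])
      · by_cases hjk : j = (⟨k - 1, hk1⟩ : Fin k)
        · rw [if_neg hj0, if_neg hjr, zero_add, zero_add, if_pos hjk, hjk]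
          by_cases hrk : r + 2 ≤ k
          · rw [if_pos hrk]
            have hres := count_split' k (k - 1) (by omega) {r} {r} ∅
              (by intro x hx; rw [Finset.mem_singleton] at hx; omega) (by simp)
              (by rw [if_neg (by omega), Finset.image_empty, Finset.union_empty,
                    Finset.union_empty])
            exact hres.trans (by rw [Nat.choose_self, one_mul,
              show k - 1 - (k - 1) = 0 by omega, PP_small (show (0:ℕ) ≤ 2 by omega),
              Nat.factorial_zero, mul_one])
          · rw [if_neg hrk]
            have hrk' : r = k - 1 := by omega
            apply count_zero
            intro π hπ hS
            have hb := ((peak_bounds k (k - 1) (by omega) π hπ).1 r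
              (by rw [hS]; exact Finset.mem_singleton_self r))
            omega
        · rw [if_neg hj0, if_neg hjr, if_neg hjk, add_zero, add_zero]
          have hq1 : 1 ≤ j.1 := by
            rcases Nat.eq_zero_or_pos j.1 with h | h
            · exact absurd (Fin.ext h) hj0
            · exact h
          have hq2 : j.1 + 2 ≤ k := by
            have h1 : j.1 ≠ k - 1 := fun h => hjk (Fin.ext h)
            have := j.2
            omega
          have hqr : j.1 ≠ r - 1 := fun h => hjr (Fin.ext h)
          apply count_zero
          intro π hπ hS
          have := (peak_bounds k j.1 j.2 π hπ).2 ⟨hq1, hq2⟩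
          rw [hS, Finset.mem_singleton] at this
          omega
  rw [PP_partition k (by omega) {r}, Finset.sum_congr rfl (fun j _ => key j),
    Finset.sum_add_distrib, Finset.sum_add_distrib,
    Finset.sum_ite_eq' univ, Finset.sum_ite_eq' univ, Finset.sum_ite_eq' univ,
    if_pos (Finset.mem_univ _), if_pos (Finset.mem_univ _), if_pos (Finset.mem_univ _)]

lemma PP_single : ∀ k r : ℕ, 2 ≤ r → r + 1 ≤ k →
    PP k {r} + 2 ^ (k - 2) = (k - 1).choose (r - 1) * 2 ^ (k - 2) := by
  intro k
  induction k using Nat.strong_induction_on with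
  | _ k IH =>
    intro r h2 hk
    have hstep := PP_single_step k r h2 hk
    have hT1 : PP (r - 1) ∅ * PP (k - r) ∅ = 2 ^ (k - 3) := by
      rw [PP_empty (r - 1) (by omega), PP_empty (k - r) (by omega), ← pow_add]
      congr 1
      omega
    rw [hT1] at hstep
    have hA : (2:ℕ) ^ (k - 2) = 2 * 2 ^ (k - 3) ∨ k = 3 := by
      rcases Nat.lt_or_ge k 4 with h | h
      · right; omega
      · left; rw [← pow_succ']; congr 1; omega
    -- Pascal
    have hP : (k - 1).choose (r - 1) = (k - 2).choose (r - 2) + (k - 2).choose (r - 1) := by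
      rw [show k - 1 = (k - 2) + 1 by omega, show r - 1 = (r - 2) + 1 by omega]
      exact Nat.choose_succ_succ _ _
    by_cases hr3 : 3 ≤ r
    · rw [if_pos hr3] at hstep
      have IH1 := IH (k - 1) (by omega) (r - 1) (by omega) (by omega)
      rw [show k - 1 - 1 = k - 2 by omega, show r - 1 - 1 = r - 2 by omega,
        show k - 1 - 2 = k - 3 by omega] at IH1
      by_cases hrk : r + 2 ≤ k
      · rw [if_pos hrk] at hstep
        have IH2 := IH (k - 1) (by omega) r h2 (by omega)
        rw [show k - 1 - 2 = k - 3 by omega, show k - 1 - 1 = k - 2 by omega] at IH2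
        have hA' : (2:ℕ) ^ (k - 2) = 2 * 2 ^ (k - 3) := by
          rcases hA with h | h
          · exact h
          · omega
        have e1 : (k - 1).choose (r - 1) * 2 ^ (k - 2)
            = 2 * ((k - 2).choose (r - 2) * 2 ^ (k - 3))
              + 2 * ((k - 2).choose (r - 1) * 2 ^ (k - 3)) := by
          rw [hP, hA']; ring
        have e2 : (k - 1).choose (r - 1) * 2 ^ (k - 3)
            = (k - 2).choose (r - 2) * 2 ^ (k - 3) + (k - 2).choose (r - 1) * 2 ^ (k - 3) := by
          rw [hP]; ring
        rw [hstep, e1, e2, hA']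
        omega
      · -- k = r + 1
        have hkr : k = r + 1 := by omega
        rw [if_neg hrk, add_zero] at hstep
        have hch : (k - 2).choose (r - 1) = 1 := by
          rw [show k - 2 = r - 1 by omega, Nat.choose_self]
        have e2 : (k - 1).choose (r - 1) * 2 ^ (k - 3)
            = (k - 2).choose (r - 2) * 2 ^ (k - 3) + 2 ^ (k - 3) := by
          rw [hP, hch]; ring
        have hA' : (2:ℕ) ^ (k - 2) = 2 * 2 ^ (k - 3) := by
          rcases hA with h | h
          · exact h
          · omega
        have e1 : (k - 1).choose (r - 1) * 2 ^ (k - 2)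
            = 2 * ((k - 2).choose (r - 2) * 2 ^ (k - 3)) + 2 * 2 ^ (k - 3) := by
          rw [hP, hch, hA']; ring
        rw [hstep, e1, hA']
        omega
    · -- r = 2
      have hr2 : r = 2 := by omega
      subst hr2
      rw [if_neg hr3, zero_add] at hstep
      rw [show (2:ℕ) - 1 = 1 from rfl] at hstep ⊢
      by_cases hrk : 4 ≤ k
      · rw [if_pos (by omega)] at hstep
        have IH2 := IH (k - 1) (by omega) 2 (by omega) (by omega)
        rw [show k - 1 - 2 = k - 3 by omega, show k - 1 - 1 = k - 2 by omega,
          show (2:ℕ) - 1 = 1 from rfl] at IH2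
        have hA' : (2:ℕ) ^ (k - 2) = 2 * 2 ^ (k - 3) := by
          rcases hA with h | h
          · exact h
          · omega
        have hP1 : (k - 1).choose 1 = (k - 2).choose 1 + 1 := by
          rw [Nat.choose_one_right, Nat.choose_one_right]
          omega
        have e1 : (k - 1).choose 1 * 2 ^ (k - 2)
            = 2 * ((k - 2).choose 1 * 2 ^ (k - 3)) + 2 * 2 ^ (k - 3) := by
          rw [hP1, hA']; ring
        have e2 : (k - 1).choose 1 * 2 ^ (k - 3)
            = (k - 2).choose 1 * 2 ^ (k - 3) + 2 ^ (k - 3) := by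
          rw [hP1]; ring
        rw [hstep, e1, e2, hA']
        omega
      · -- k = 3
        have hk3 : k = 3 := by omega
        subst hk3
        rw [if_neg (by omega), add_zero] at hstep
        rw [hstep]
        decide

lemma PP_twom_step (n m : ℕ) (h4 : 4 ≤ m) (hm : m + 1 ≤ n) :
    PP n {2, m} = (n - 1).choose 1 * (PP 1 ∅ * PP (n - 2) {m - 2})
      + (n - 1).choose (m - 1) * (PP (m - 1) {2} * PP (n - m) ∅)
      + (if m + 2 ≤ n then PP (n - 1) {2, m} else 0) := by
  have h1n : 1 < n := by omega
  have hm1n : m - 1 < n := by omega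
  have hn1n : n - 1 < n := by omega
  have key : ∀ j : Fin n,
      ((univ : Finset (Equiv.Perm (Fin n))).filter fun π =>
        π j = ⟨n - 1, by omega⟩ ∧ sPeakSet n π = {2, m}).card
      = (if j = (⟨1, h1n⟩ : Fin n) then
            (n - 1).choose 1 * (PP 1 ∅ * PP (n - 2) {m - 2}) else 0)
        + (if j = (⟨m - 1, hm1n⟩ : Fin n) then
            (n - 1).choose (m - 1) * (PP (m - 1) {2} * PP (n - m) ∅) else 0)
        + (if j = (⟨n - 1, hn1n⟩ : Fin n) then
            (if m + 2 ≤ n then PP (n - 1) {2, m} else 0) else 0) := by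
    intro j
    by_cases hj1 : j = (⟨1, h1n⟩ : Fin n)
    · rw [if_neg (show ¬ j = (⟨m - 1, hm1n⟩ : Fin n) by
          intro h; rw [hj1] at h; rw [Fin.mk.injEq] at h; omega),
        if_neg (show ¬ j = (⟨n - 1, hn1n⟩ : Fin n) by
          intro h; rw [hj1] at h; rw [Fin.mk.injEq] at h; omega),
        add_zero, add_zero, if_pos hj1, hj1]
      have hres := count_split' n 1 h1n {2, m} ∅ {m - 2} (by simp)
        (by intro x hx; rw [Finset.mem_singleton] at hx; omega)
        (by rw [if_pos (by omega : (1:ℕ) ≤ 1 ∧ 1 + 2 ≤ n), Finset.empty_union,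
              Finset.image_singleton, show m - 2 + (1 + 1) = m by omega]
            exact Finset.insert_eq 2 {m})
      exact hres.trans (by rw [show n - 1 - 1 = n - 2 by omega])
    · by_cases hjm : j = (⟨m - 1, hm1n⟩ : Fin n)
      · rw [if_neg hj1,
          if_neg (show ¬ j = (⟨n - 1, hn1n⟩ : Fin n) by
            intro h; rw [hjm] at h; rw [Fin.mk.injEq] at h; omega),
          zero_add, add_zero, if_pos hjm, hjm]
        have hres := count_split' n (m - 1) hm1n {2, m} {2} ∅
          (by intro x hx; rw [Finset.mem_singleton] at hx; omega) (by simp)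
          (by rw [if_pos (by omega : 1 ≤ m - 1 ∧ m - 1 + 2 ≤ n), Finset.image_empty,
                Finset.union_empty, show m - 1 + 1 = m by omega]
              exact Finset.insert_eq 2 {m})
        exact hres.trans (by rw [show n - 1 - (m - 1) = n - m by omega])
      · by_cases hjn : j = (⟨n - 1, hn1n⟩ : Fin n)
        · rw [if_neg hj1, if_neg hjm, zero_add, zero_add, if_pos hjn, hjn]
          by_cases hmn : m + 2 ≤ n
          · rw [if_pos hmn]
            have hres := count_split' n (n - 1) hn1n {2, m} {2, m} ∅
              (by intro x hx
                  rcases Finset.mem_insert.mp hx with h | h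
                  · omega
                  · rw [Finset.mem_singleton] at h; omega)
              (by simp)
              (by rw [if_neg (by omega), Finset.union_empty, Finset.image_empty,
                    Finset.union_empty])
            exact hres.trans (by rw [Nat.choose_self, one_mul,
              show n - 1 - (n - 1) = 0 by omega, PP_small (show (0:ℕ) ≤ 2 by omega),
              Nat.factorial_zero, mul_one])
          · rw [if_neg hmn]
            apply count_zero
            intro π hπ hS
            have hb := (peak_bounds n (n - 1) hn1n π hπ).1 m
              (by rw [hS]; exact Finset.mem_insert.mpr (Or.inr (Finset.mem_singleton_self m)))
            omega
        · rw [if_neg hj1, if_neg hjm, if_neg hjn, add_zero, add_zero]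
          by_cases hq0 : j.1 = 0
          · apply count_zero
            intro π hπ hS
            have hb := (peak_bounds n j.1 j.2 π hπ).1 2
              (by rw [hS]; exact Finset.mem_insert_self 2 {m})
            omega
          · have hq1 : 1 ≤ j.1 := by omega
            have hq2 : j.1 + 2 ≤ n := by
              have h1 : j.1 ≠ n - 1 := fun h => hjn (Fin.ext h)
              have := j.2
              omega
            have hne1 : j.1 ≠ 1 := fun h => hj1 (Fin.ext h)
            have hnem : j.1 ≠ m - 1 := fun h => hjm (Fin.ext h)
            apply count_zero
            intro π hπ hS
            have := (peak_bounds n j.1 j.2 π hπ).2 ⟨hq1, hq2⟩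
            rw [hS] at this
            rcases Finset.mem_insert.mp this with h | h
            · omega
            · rw [Finset.mem_singleton] at h; omega
  rw [PP_partition n (by omega) {2, m}, Finset.sum_congr rfl (fun j _ => key j),
    Finset.sum_add_distrib, Finset.sum_add_distrib,
    Finset.sum_ite_eq' univ, Finset.sum_ite_eq' univ, Finset.sum_ite_eq' univ,
    if_pos (Finset.mem_univ _), if_pos (Finset.mem_univ _), if_pos (Finset.mem_univ _)]

lemma PP_two_m (m : ℕ) (h4 : 4 ≤ m) : ∀ n, m + 1 ≤ n →
    (PP n {2, m} : ℤ) = (((m : ℤ) - 3) * ((n - 2).choose (m - 1) : ℕ)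
      + ((m : ℤ) - 2) * ((n - 2).choose (m - 2) : ℕ) - ((n : ℤ) - 2)) * 2 ^ (n - 3) := by
  intro n hn
  induction n, hn using Nat.le_induction with
  | base =>
    have hstep := PP_twom_step (m + 1) m h4 (by omega)
    rw [if_neg (by omega), add_zero, show m + 1 - 1 = m from rfl,
      show m + 1 - 2 = m - 1 by omega, show m + 1 - m = 1 by omega,
      Nat.choose_one_right, PP_small (show (1:ℕ) ≤ 2 by omega), Nat.factorial_one,
      one_mul, mul_one,
      show m.choose (m - 1) = m by
        rw [Nat.choose_symm (by omega : 1 ≤ m), Nat.choose_one_right]] at hstep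
    -- values of the two single-peak counts
    have hs1 := PP_single (m - 1) (m - 2) (by omega) (by omega)
    rw [show m - 1 - 2 = m - 3 by omega, show m - 1 - 1 = m - 2 by omega,
      show m - 2 - 1 = m - 3 by omega,
      show (m - 2).choose (m - 3) = m - 2 by
        rw [show m - 3 = m - 2 - 1 by omega, Nat.choose_symm (by omega : 1 ≤ m - 2),
          Nat.choose_one_right]] at hs1
    have hs2 := PP_single (m - 1) 2 (by omega) (by omega)
    rw [show m - 1 - 2 = m - 3 by omega, show m - 1 - 1 = m - 2 by omega,
      show (2:ℕ) - 1 = 1 from rfl, Nat.choose_one_right] at hs2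
    -- cast everything
    have hc : (PP (m + 1) {2, m} : ℤ) = m * (PP (m - 1) {m - 2} : ℕ)
        + m * (PP (m - 1) {2} : ℕ) := by exact_mod_cast congrArg (Nat.cast (R := ℤ)) hstep
    have hv1 : ((PP (m - 1) {m - 2} : ℕ) : ℤ) = ((m : ℤ) - 3) * 2 ^ (m - 3) := by
      have := congrArg (Nat.cast (R := ℤ)) hs1
      push_cast at this
      have hc2 : ((m - 2 : ℕ) : ℤ) = (m : ℤ) - 2 := by omega
      rw [hc2] at this
      linarith
    have hv2 : ((PP (m - 1) {2} : ℕ) : ℤ) = ((m : ℤ) - 3) * 2 ^ (m - 3) := by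
      have := congrArg (Nat.cast (R := ℤ)) hs2
      push_cast at this
      have hc2 : ((m - 2 : ℕ) : ℤ) = (m : ℤ) - 2 := by omega
      rw [hc2] at this
      linarith
    rw [hc, hv1, hv2]
    -- the target side
    rw [show m + 1 - 2 = m - 1 by omega, show m + 1 - 3 = m - 2 by omega,
      Nat.choose_self,
      show (m - 1).choose (m - 2) = m - 1 by
        rw [show m - 2 = m - 1 - 1 by omega, Nat.choose_symm (by omega : 1 ≤ m - 1),
          Nat.choose_one_right],
      show (2:ℤ) ^ (m - 2) = 2 * 2 ^ (m - 3) by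
        rw [← pow_succ']; congr 1; omega]
    have hc1 : ((m - 1 : ℕ) : ℤ) = (m : ℤ) - 1 := by omega
    rw [hc1]
    push_cast
    ring
  | succ n hn IH =>
    have hstep := PP_twom_step (n + 1) m h4 (by omega)
    rw [if_pos (by omega), show n + 1 - 1 = n from rfl, show n + 1 - 2 = n - 1 by omega,
      Nat.choose_one_right, PP_small (show (1:ℕ) ≤ 2 by omega), Nat.factorial_one, one_mul,
      PP_empty (n + 1 - m) (by omega), show n + 1 - m - 1 = n - m by omega] at hstep
    -- single-peak values
    have hs1 := PP_single (n - 1) (m - 2) (by omega) (by omega)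
    rw [show n - 1 - 2 = n - 3 by omega, show n - 1 - 1 = n - 2 by omega,
      show m - 2 - 1 = m - 3 by omega] at hs1
    have hs2 := PP_single (m - 1) 2 (by omega) (by omega)
    rw [show m - 1 - 2 = m - 3 by omega, show m - 1 - 1 = m - 2 by omega,
      show (2:ℕ) - 1 = 1 from rfl, Nat.choose_one_right] at hs2
    have hv1 : ((PP (n - 1) {m - 2} : ℕ) : ℤ)
        = (((n - 2).choose (m - 3) : ℕ) : ℤ) * 2 ^ (n - 3) - 2 ^ (n - 3) := by
      have := congrArg (Nat.cast (R := ℤ)) hs1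
      push_cast at this
      linarith
    have hv2 : ((PP (m - 1) {2} : ℕ) : ℤ) = ((m : ℤ) - 3) * 2 ^ (m - 3) := by
      have := congrArg (Nat.cast (R := ℤ)) hs2
      push_cast at this
      have hc2 : ((m - 2 : ℕ) : ℤ) = (m : ℤ) - 2 := by omega
      rw [hc2] at this
      linarith
    have hc : (PP (n + 1) {2, m} : ℤ) = n * (PP (n - 1) {m - 2} : ℕ)
        + (n.choose (m - 1) : ℕ) * ((PP (m - 1) {2} : ℕ) * 2 ^ (n - m))
        + (PP n {2, m} : ℕ) := by exact_mod_cast congrArg (Nat.cast (R := ℤ)) hstep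
    -- Pascals
    have hp1 : ((n - 1).choose (m - 1) : ℤ)
        = ((n - 2).choose (m - 2) : ℕ) + ((n - 2).choose (m - 1) : ℕ) := by
      have : (n - 1).choose (m - 1) = (n - 2).choose (m - 2) + (n - 2).choose (m - 1) := by
        rw [show n - 1 = (n - 2) + 1 by omega, show m - 1 = (m - 2) + 1 by omega]
        exact Nat.choose_succ_succ _ _
      exact_mod_cast congrArg (Nat.cast (R := ℤ)) this
    have hp2 : ((n - 1).choose (m - 2) : ℤ)
        = ((n - 2).choose (m - 3) : ℕ) + ((n - 2).choose (m - 2) : ℕ) := by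
      have : (n - 1).choose (m - 2) = (n - 2).choose (m - 3) + (n - 2).choose (m - 2) := by
        rw [show n - 1 = (n - 2) + 1 by omega, show m - 2 = (m - 3) + 1 by omega]
        exact Nat.choose_succ_succ _ _
      exact_mod_cast congrArg (Nat.cast (R := ℤ)) this
    have hp3 : (n.choose (m - 1) : ℤ)
        = (((n - 2).choose (m - 2) : ℕ) + ((n - 2).choose (m - 1) : ℕ))
          + (((n - 2).choose (m - 3) : ℕ) + ((n - 2).choose (m - 2) : ℕ)) := by
      have : n.choose (m - 1) = (n - 1).choose (m - 2) + (n - 1).choose (m - 1) := by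
        rw [show n = (n - 1) + 1 by omega, show m - 1 = (m - 2) + 1 by omega]
        exact Nat.choose_succ_succ _ _
      have h' := congrArg (Nat.cast (R := ℤ)) this
      push_cast at h'
      rw [h', hp1, hp2]
      ring
    -- absorption
    have habs : (((n - 2).choose (m - 2) : ℕ) : ℤ) * ((m : ℤ) - 2)
        = (((n - 2).choose (m - 3) : ℕ) : ℤ) * ((n : ℤ) + 1 - m) := by
      have h0 : (n - 2).choose ((m - 3) + 1) * ((m - 3) + 1)
          = (n - 2).choose (m - 3) * (n - 2 - (m - 3)) := Nat.choose_succ_right_eq _ _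
      rw [show (m - 3) + 1 = m - 2 by omega, show n - 2 - (m - 3) = n + 1 - m by omega] at h0
      have h' := congrArg (Nat.cast (R := ℤ)) h0
      push_cast at h'
      have e1 : ((m - 2 : ℕ) : ℤ) = (m : ℤ) - 2 := by omega
      have e2 : ((n + 1 - m : ℕ) : ℤ) = (n : ℤ) + 1 - m := by omega
      rw [e1, e2] at h'
      exact h'
    -- pow splits
    have hYX : (2:ℤ) ^ (m - 3) * 2 ^ (n - m) = 2 ^ (n - 3) := by
      rw [← pow_add]; congr 1; omega
    have hpow : (2:ℤ) ^ (n + 1 - 3) = 2 * 2 ^ (n - 3) := by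
      rw [← pow_succ']; congr 1; omega
    rw [hc, hv1, hv2, IH, hp3, show n + 1 - 2 = n - 1 by omega, hpow, hp1, hp2]
    push_cast
    linear_combination (((m : ℤ) - 3) * (((n - 2).choose (m - 1) : ℕ)
        + 2 * (((n - 2).choose (m - 2) : ℕ) : ℤ) + (((n - 2).choose (m - 3) : ℕ) : ℤ))) * hYX
      - (2:ℤ) ^ (n - 3) * habs

def fsgn (n : ℕ) (η : Fin n → Bool) (v : Fin n) : ℤ :=
  (if η v then (-1 : ℤ) else 1) * ((v : ℕ) + 1)

lemma fsgn_inj (n : ℕ) (η : Fin n → Bool) : Function.Injective (fsgn n η) := by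
  intro a b h
  have habs := congrArg Int.natAbs h
  unfold fsgn at habs
  apply Fin.ext
  by_cases ha : η a <;> by_cases hb : η b <;>
    simp [ha, hb, Int.natAbs_mul] at habs <;> omega

lemma exists_rho (n : ℕ) (η : Fin n → Bool) :
    ∃ ρ : Equiv.Perm (Fin n), ∀ a b, fsgn n η a < fsgn n η b ↔ ρ a < ρ b := by
  classical
  set s : Finset ℤ := Finset.univ.image (fsgn n η) with hs
  have hsc : s.card = n := by
    rw [hs, Finset.card_image_of_injective _ (fsgn_inj n η), Finset.card_univ, Fintype.card_fin]
  set e : Fin n → Fin n := fun v =>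
    (s.orderIsoOfFin hsc).symm ⟨fsgn n η v, by
      rw [hs]; exact Finset.mem_image_of_mem _ (Finset.mem_univ v)⟩ with he
  have hmono : ∀ a b, fsgn n η a < fsgn n η b ↔ e a < e b := by
    intro a b
    rw [he]
    simp only [OrderIso.lt_iff_lt, Subtype.mk_lt_mk]
  have heinj : Function.Injective e := by
    intro a b hab
    apply fsgn_inj n η
    have h1 : ¬ fsgn n η a < fsgn n η b := by rw [hmono]; omega
    have h2 : ¬ fsgn n η b < fsgn n η a := by rw [hmono]; omega
    omega
  exact ⟨Equiv.ofBijective e (Finite.injective_iff_bijective.mp heinj), hmono⟩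

lemma bval_eq (n : ℕ) (σ : Equiv.Perm (Fin n)) (η : Fin n → Bool) {x : ℕ} (hx : x - 1 < n) :
    bval n (σ, η ∘ σ) x = fsgn n η (σ ⟨x - 1, hx⟩) := by
  unfold bval fsgn
  rw [dif_pos hx]
  rfl

lemma bpeak_transport (n : ℕ) (σ : Equiv.Perm (Fin n)) (η : Fin n → Bool)
    (ρ : Equiv.Perm (Fin n)) (hρ : ∀ a b, fsgn n η a < fsgn n η b ↔ ρ a < ρ b) :
    bPeakSet n (σ, η ∘ σ) = sPeakSet n (σ.trans ρ) := by
  unfold bPeakSet sPeakSet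
  apply Finset.filter_congr
  intro i hi
  rw [Finset.mem_Icc] at hi
  have h3 : 3 ≤ n := by omega
  have hlt : ∀ (x y : ℕ) (hx : x - 1 < n) (hy : y - 1 < n),
      (bval n (σ, η ∘ σ) x < bval n (σ, η ∘ σ) y ↔
        sval n (σ.trans ρ) x < sval n (σ.trans ρ) y) := by
    intro x y hx hy
    rw [bval_eq n σ η hx, bval_eq n σ η hy, sval_lt_sval _ hx hy, hρ]
    rfl
  rw [hlt (i - 1) i (by omega) (by omega), hlt (i + 1) i (by omega) (by omega)]

lemma PB_eq (n : ℕ) (S : Finset ℕ) : PB n S = 2 ^ n * PP n S := by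
  classical
  have h1 : PB n S = ((univ : Finset (Equiv.Perm (Fin n) × (Fin n → Bool))).filter
      (fun p => bPeakSet n (p.1, p.2 ∘ p.1) = S)).card := by
    rw [PB]
    apply Finset.card_nbij'
      (i := fun p : Equiv.Perm (Fin n) × (Fin n → Bool) => (p.1, p.2 ∘ ⇑p.1.symm))
      (j := fun p : Equiv.Perm (Fin n) × (Fin n → Bool) => (p.1, p.2 ∘ ⇑p.1))
    · intro p hp
      rw [Finset.mem_coe, Finset.mem_filter] at hp ⊢
      refine ⟨Finset.mem_univ _, ?_⟩
      have he : ((p.2 ∘ p.1.symm) ∘ p.1) = p.2 := by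
        funext x
        simp [Function.comp]
      simp only [he]
      exact hp.2
    · intro p hp
      rw [Finset.mem_coe, Finset.mem_filter] at hp ⊢
      exact ⟨Finset.mem_univ _, hp.2⟩
    · intro p _
      show (p.1, (p.2 ∘ ⇑p.1.symm) ∘ ⇑p.1) = p
      have he : ((p.2 ∘ ⇑p.1.symm) ∘ ⇑p.1) = p.2 := by
        funext x
        simp [Function.comp]
      rw [he]
    · intro p _
      show (p.1, (p.2 ∘ ⇑p.1) ∘ ⇑p.1.symm) = p
      have he : ((p.2 ∘ ⇑p.1) ∘ ⇑p.1.symm) = p.2 := by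
        funext x
        simp [Function.comp]
      rw [he]
  rw [h1, Finset.card_eq_sum_card_fiberwise (f := Prod.snd) (t := univ)
    (fun _ _ => Finset.mem_univ _)]
  have h3 : ∀ η : Fin n → Bool,
      (((univ : Finset (Equiv.Perm (Fin n) × (Fin n → Bool))).filter
        (fun p : Equiv.Perm (Fin n) × (Fin n → Bool) => bPeakSet n (p.1, p.2 ∘ ⇑p.1) = S)).filter
          (fun p => p.2 = η)).card
        = PP n S := by
    intro η
    obtain ⟨ρ, hρ⟩ := exists_rho n η
    rw [PP]
    apply Finset.card_nbij'
      (i := fun p : Equiv.Perm (Fin n) × (Fin n → Bool) => p.1.trans ρ)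
      (j := fun τ : Equiv.Perm (Fin n) => (τ.trans ρ.symm, η))
    · intro p hp
      rw [Finset.mem_coe, Finset.mem_filter, Finset.mem_filter] at hp
      obtain ⟨⟨-, hPk⟩, hη⟩ := hp
      rw [Finset.mem_coe, Finset.mem_filter]
      refine ⟨Finset.mem_univ _, ?_⟩
      rw [← bpeak_transport n p.1 η ρ hρ, ← hη]
      exact hPk
    · intro τ hτ
      rw [Finset.mem_coe, Finset.mem_filter] at hτ
      rw [Finset.mem_coe, Finset.mem_filter, Finset.mem_filter]
      refine ⟨⟨Finset.mem_univ _, ?_⟩, rfl⟩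
      show bPeakSet n (τ.trans ρ.symm, η ∘ ⇑(τ.trans ρ.symm)) = S
      rw [bpeak_transport n (τ.trans ρ.symm) η ρ hρ]
      have he : (τ.trans ρ.symm).trans ρ = τ := by
        ext x
        simp
      rw [he]
      exact hτ.2
    · intro p hp
      rw [Finset.mem_coe, Finset.mem_filter] at hp
      have hcomp : (p.1.trans ρ).trans ρ.symm = p.1 := by
        ext x
        simp
      show ((p.1.trans ρ).trans ρ.symm, η) = p
      rw [hcomp, ← hp.2]
    · intro τ _
      show (τ.trans ρ.symm).trans ρ = τ
      ext x
      simp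
  rw [Finset.sum_congr rfl (fun η _ => h3 η), Finset.sum_const, Finset.card_univ, smul_eq_mul]
  congr 1
  simp

end Stmt7

/-- `#P_B({2,m},n) = ((m-3)C(n-2,m-1) + (m-2)C(n-2,m-2) - (n-2))·2^(2n-3)`. -/
theorem stmt7 (n m : ℕ) (h4 : 4 ≤ m) (hm : m ≤ n - 1) :
    (PB n {2, m} : ℤ)
      = (((m : ℤ) - 3) * Nat.choose (n - 2) (m - 1)
          + ((m : ℤ) - 2) * Nat.choose (n - 2) (m - 2) - ((n : ℤ) - 2)) * 2 ^ (2 * n - 3) := by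
  have hmn : m + 1 ≤ n := by
    rcases Nat.lt_or_ge n 1 with h | h
    · omega
    · omega
  have hn5 : 5 ≤ n := by omega
  rw [Stmt7.PB_eq n {2, m}]
  push_cast
  rw [Stmt7.PP_two_m m h4 n hmn]
  have hp : (2:ℤ) ^ n * 2 ^ (n - 3) = 2 ^ (2 * n - 3) := by
    rw [← pow_add]
    congr 1
    omega
  rw [← hp]
  ring
end

section
/- The number of signed permutations π ∈ B_n with π_0 = 0 prepended having empty peak set equals (3^n + 1)/2. -/
open Finset

lemma bval_eq (n : ℕ) (π : Equiv.Perm (Fin n) × (Fin n → Bool)) {i : ℕ} (h1 : 1 ≤ i) (h2 : i ≤ n) :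
    bval n π i = (if π.2 ⟨i-1, by omega⟩ then (-1 : ℤ) else 1) * (((π.1 ⟨i-1, by omega⟩ : ℕ) : ℤ) + 1) := by
  rw [bval, dif_pos]

lemma bval_natAbs (n : ℕ) (π : Equiv.Perm (Fin n) × (Fin n → Bool)) {i : ℕ} (h1 : 1 ≤ i) (h2 : i ≤ n) :
    (bval n π i).natAbs = (π.1 ⟨i-1, by omega⟩ : ℕ) + 1 := by
  rw [bval_eq n π h1 h2]; split_ifs <;> omega

lemma bval_neg_iff (n : ℕ) (π : Equiv.Perm (Fin n) × (Fin n → Bool)) {i : ℕ} (h1 : 1 ≤ i) (h2 : i ≤ n) :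
    bval n π i < 0 ↔ π.2 ⟨i-1, by omega⟩ = true := by
  rw [bval_eq n π h1 h2]; split_ifs with h <;> simp [h] <;> omega

lemma bval_natAbs' (n : ℕ) (π : Equiv.Perm (Fin n) × (Fin n → Bool)) (p : Fin n) :
    (bval n π ((p : ℕ)+1)).natAbs = (π.1 p : ℕ) + 1 := by
  rw [bval, dif_pos (show (p:ℕ)+1-1 < n by omega)]
  simp only [Nat.add_sub_cancel, Fin.eta]
  split_ifs <;> simp only [neg_one_mul, one_mul] <;> omega

lemma bval_neg_iff' (n : ℕ) (π : Equiv.Perm (Fin n) × (Fin n → Bool)) (p : Fin n) :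
    (bval n π ((p : ℕ)+1) < 0 ↔ π.2 p = true) := by
  rw [bval, dif_pos (show (p:ℕ)+1-1 < n by omega)]
  simp only [Nat.add_sub_cancel, Fin.eta]
  split_ifs with hb
  · simp only [hb, neg_one_mul]
    exact ⟨fun _ => trivial, fun _ => by omega⟩
  · simp only [one_mul]
    exact ⟨fun h => absurd h (by omega), fun h => absurd h hb⟩

lemma bval_ne_zero (n : ℕ) (π : Equiv.Perm (Fin n) × (Fin n → Bool)) {i : ℕ} (h1 : 1 ≤ i) (h2 : i ≤ n) :
    bval n π i ≠ 0 := by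
  have := bval_natAbs n π h1 h2; omega

lemma bval_natAbs_le (n : ℕ) (π : Equiv.Perm (Fin n) × (Fin n → Bool)) {i : ℕ} (h1 : 1 ≤ i) (h2 : i ≤ n) :
    1 ≤ (bval n π i).natAbs ∧ (bval n π i).natAbs ≤ n := by
  have := bval_natAbs n π h1 h2
  have h3 : (π.1 ⟨i-1, by omega⟩ : ℕ) < n := (π.1 _).isLt
  omega

lemma bval_natAbs_inj (n : ℕ) (π : Equiv.Perm (Fin n) × (Fin n → Bool)) {i i' : ℕ}
    (h1 : 1 ≤ i) (h2 : i ≤ n) (h1' : 1 ≤ i') (h2' : i' ≤ n)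
    (h : (bval n π i).natAbs = (bval n π i').natAbs) : i = i' := by
  rw [bval_natAbs n π h1 h2, bval_natAbs n π h1' h2'] at h
  have h' : π.1 ⟨i-1, by omega⟩ = π.1 ⟨i'-1, by omega⟩ := Fin.ext (by omega)
  have h'' := congrArg Fin.val (π.1.injective h')
  simp only [] at h''
  omega

lemma bval_ne (n : ℕ) (π : Equiv.Perm (Fin n) × (Fin n → Bool)) {i i' : ℕ}
    (h1 : 1 ≤ i) (h2 : i ≤ n) (h1' : 1 ≤ i') (h2' : i' ≤ n) (hne : i ≠ i') :
    bval n π i ≠ bval n π i' := fun h =>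
  hne (bval_natAbs_inj n π h1 h2 h1' h2' (by rw [h]))

lemma perm_ext (n : ℕ) (π π' : Equiv.Perm (Fin n) × (Fin n → Bool))
    (h : ∀ i, 1 ≤ i → i ≤ n → bval n π i = bval n π' i) : π = π' := by
  have key : ∀ p : Fin n, bval n π ((p : ℕ)+1) = bval n π' ((p : ℕ)+1) :=
    fun p => h _ (by omega) (by omega)
  refine Prod.ext ?_ ?_
  · refine Equiv.ext fun p => ?_
    have := congrArg Int.natAbs (key p)
    rw [bval_natAbs' n π p, bval_natAbs' n π' p] at this
    exact Fin.ext (by omega)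
  · funext p
    have hiff := (bval_neg_iff' n π p).symm.trans (Iff.trans (by rw [key p]) (bval_neg_iff' n π' p))
    rcases Bool.eq_false_or_eq_true (π.2 p) with hb | hb <;>
      rcases Bool.eq_false_or_eq_true (π'.2 p) with hb' | hb' <;> simp_all

/-- Construct a signed permutation from a (1-indexed) value function. -/
noncomputable def mkP (n : ℕ) (a : ℕ → ℤ)
    (ha : ∀ i, 1 ≤ i → i ≤ n → 1 ≤ (a i).natAbs ∧ (a i).natAbs ≤ n)
    (hinj : ∀ i i', 1 ≤ i → i ≤ n → 1 ≤ i' → i' ≤ n → (a i).natAbs = (a i').natAbs → i = i') :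
    Equiv.Perm (Fin n) × (Fin n → Bool) :=
  ⟨Equiv.ofBijective
      (fun p : Fin n => (⟨(a ((p : ℕ)+1)).natAbs - 1, by
        have := ha ((p:ℕ)+1) (by omega) (by omega)
        have := p.isLt
        omega⟩ : Fin n))
      (Finite.injective_iff_bijective.1 (by
        intro p q hpq
        have hp := ha ((p:ℕ)+1) (by omega) (by omega)
        have hq := ha ((q:ℕ)+1) (by omega) (by omega)
        have : (a ((p:ℕ)+1)).natAbs - 1 = (a ((q:ℕ)+1)).natAbs - 1 := congrArg Fin.val hpq
        have := hinj ((p:ℕ)+1) ((q:ℕ)+1) (by omega) (by omega) (by omega) (by omega) (by omega)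
        exact Fin.ext (by omega))),
    fun p => decide (a ((p : ℕ)+1) < 0)⟩

lemma mkP_bval (n : ℕ) (a : ℕ → ℤ) (ha) (hinj) {i : ℕ} (h1 : 1 ≤ i) (h2 : i ≤ n) :
    bval n (mkP n a ha hinj) i = a i := by
  rw [bval_eq n _ h1 h2]
  show (if decide (a ((i-1)+1) < 0) then (-1:ℤ) else 1) *
    (((((a ((i-1)+1)).natAbs - 1 : ℕ) : ℤ)) + 1) = a i
  have hi : (i-1)+1 = i := by omega
  rw [hi]
  have hx := ha i h1 h2
  rcases lt_or_ge (a i) 0 with h | h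
  · rw [decide_eq_true h, if_pos rfl]; omega
  · rw [decide_eq_false (by omega), if_neg (by simp)]; omega
open Finset

def Lset (n : ℕ) : Finset (Fin n → Fin 3) :=
  univ.filter fun f => ∀ j, f j = 1 → ∃ j', j' < j ∧ f j' = 2

lemma mem_Lset {n : ℕ} {f : Fin n → Fin 3} :
    f ∈ Lset n ↔ ∀ j, f j = 1 → ∃ j', j' < j ∧ f j' = 2 := by
  simp [Lset]

lemma Lset_succ (n : ℕ) :
    Lset (n+1) = (univ.image (fun g : Fin n → Fin 3 => Fin.cons 2 g)) ∪
      ((Lset n).image (fun g : Fin n → Fin 3 => Fin.cons 0 g)) := by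
  ext f
  simp only [mem_union, mem_image, mem_univ, true_and]
  constructor
  · intro hf
    rw [mem_Lset] at hf
    rcases show f 0 = 0 ∨ f 0 = 1 ∨ f 0 = 2 by
        rcases h : f 0 with ⟨v, hv⟩; interval_cases v <;> simp [Fin.ext_iff]
      with h0 | h0 | h0
    · right
      refine ⟨Fin.tail f, ?_, by rw [← h0]; exact Fin.cons_self_tail f⟩
      rw [mem_Lset]
      intro j hj
      obtain ⟨j', hj', h2⟩ := hf j.succ hj
      rcases Fin.eq_zero_or_eq_succ j' with rfl | ⟨j'', rfl⟩
      · rw [h0] at h2; exact absurd h2 (by decide)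
      · exact ⟨j'', by simpa using hj', h2⟩
    · exfalso
      obtain ⟨j', hj', -⟩ := hf 0 h0
      exact absurd hj' (by simp)
    · left
      exact ⟨Fin.tail f, by rw [← h0]; exact Fin.cons_self_tail f⟩
  · rintro (⟨g, rfl⟩ | ⟨g, hg, rfl⟩)
    · rw [mem_Lset]
      intro j hj
      refine ⟨0, ?_, Fin.cons_zero _ _⟩
      rcases Fin.eq_zero_or_eq_succ j with rfl | ⟨j', rfl⟩
      · rw [Fin.cons_zero] at hj; exact absurd hj (by decide)
      · exact j'.succ_pos
    · rw [mem_Lset] at hg ⊢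
      intro j hj
      rcases Fin.eq_zero_or_eq_succ j with rfl | ⟨j', rfl⟩
      · rw [Fin.cons_zero] at hj; exact absurd hj (by decide)
      · rw [Fin.cons_succ] at hj
        obtain ⟨j'', hj'', h2⟩ := hg j' hj
        exact ⟨j''.succ, by simpa using hj'', by simpa using h2⟩

lemma card_Lset_succ (n : ℕ) : (Lset (n+1)).card = 3^n + (Lset n).card := by
  rw [Lset_succ, card_union_of_disjoint, card_image_of_injective _ (Fin.cons_right_injective _),
    card_image_of_injective _ (Fin.cons_right_injective _)]
  · simp [card_univ]
  · rw [disjoint_left]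
    rintro f hf hf'
    obtain ⟨g, -, rfl⟩ := mem_image.1 hf
    obtain ⟨g', -, h⟩ := mem_image.1 hf'
    have h2 : (2 : Fin 3) = 0 := by
      have := congrFun h 0
      simpa using this.symm
    exact absurd h2 (by decide)

lemma two_mul_card_Lset (n : ℕ) : 2 * (Lset n).card = 3^n + 1 := by
  induction n with
  | zero => decide
  | succ n ih =>
    rw [card_Lset_succ, Nat.mul_add, ih, pow_succ]
    ring

/-! ### labels to value functions -/

def vnum (n : ℕ) (j : Fin n) : ℤ := (n : ℤ) - (j : ℕ)

lemma vnum_natAbs (n : ℕ) (j : Fin n) : (vnum n j).natAbs = n - (j : ℕ) := by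
  have := j.isLt; unfold vnum; omega

lemma vnum_bounds (n : ℕ) (j : Fin n) : 1 ≤ vnum n j ∧ vnum n j ≤ n := by
  have := j.isLt; unfold vnum; constructor <;> [omega; omega]

lemma vnum_inj (n : ℕ) {j j' : Fin n} (h : vnum n j = vnum n j') : j = j' := by
  unfold vnum at h; exact Fin.ext (by omega)

lemma vnum_lt (n : ℕ) {j j' : Fin n} (h : j' < j) : vnum n j < vnum n j' := by
  unfold vnum; have : (j' : ℕ) < (j : ℕ) := h; omega

def lab2 (n : ℕ) (f : Fin n → Fin 3) : Finset (Fin n) := univ.filter fun j => f j = 2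

def kOf (n : ℕ) (f : Fin n → Fin 3) : ℕ := (lab2 n f).card

lemma kOf_le (n : ℕ) (f : Fin n → Fin 3) : kOf n f ≤ n := by
  have := card_filter_le (univ : Finset (Fin n)) (fun j => f j = 2)
  simpa [kOf, lab2] using this

def Dset (n : ℕ) (f : Fin n → Fin 3) : Finset ℤ := (lab2 n f).image (vnum n)

def Rset (n : ℕ) (f : Fin n → Fin 3) : Finset ℤ :=
  (univ.filter fun j => ¬ f j = 2).image (fun j => if f j = 0 then vnum n j else -vnum n j)

lemma mem_Dset {n : ℕ} {f : Fin n → Fin 3} {x : ℤ} :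
    x ∈ Dset n f ↔ ∃ j, f j = 2 ∧ x = vnum n j := by
  simp only [Dset, lab2, mem_image, mem_filter, mem_univ, true_and]
  constructor
  · rintro ⟨j, h2, rfl⟩; exact ⟨j, h2, rfl⟩
  · rintro ⟨j, h2, rfl⟩; exact ⟨j, h2, rfl⟩

lemma mem_Rset {n : ℕ} {f : Fin n → Fin 3} {x : ℤ} :
    x ∈ Rset n f ↔ (∃ j, f j = 0 ∧ x = vnum n j) ∨ (∃ j, f j = 1 ∧ x = -vnum n j) := by
  simp only [Rset, mem_image, mem_filter, mem_univ, true_and]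
  constructor
  · rintro ⟨j, h2, rfl⟩
    rcases show f j = 0 ∨ f j = 1 ∨ f j = 2 by
        rcases h : f j with ⟨v, hv⟩; interval_cases v <;> simp [Fin.ext_iff]
      with h0 | h0 | h0
    · exact Or.inl ⟨j, h0, by rw [if_pos h0]⟩
    · exact Or.inr ⟨j, h0, by rw [if_neg (by rw [h0]; decide)]⟩
    · exact absurd h0 h2
  · rintro (⟨j, h0, rfl⟩ | ⟨j, h0, rfl⟩)
    · exact ⟨j, by rw [h0]; decide, by rw [if_pos h0]⟩
    · exact ⟨j, by rw [h0]; decide, by rw [if_neg (by rw [h0]; decide)]⟩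

lemma Dset_bounds {n : ℕ} {f : Fin n → Fin 3} {x : ℤ} (hx : x ∈ Dset n f) :
    1 ≤ x ∧ x ≤ n := by
  obtain ⟨j, -, rfl⟩ := mem_Dset.1 hx; exact vnum_bounds n j

lemma Rset_natAbs {n : ℕ} {f : Fin n → Fin 3} {x : ℤ} (hx : x ∈ Rset n f) :
    1 ≤ x.natAbs ∧ x.natAbs ≤ n := by
  rcases mem_Rset.1 hx with ⟨j, -, rfl⟩ | ⟨j, -, rfl⟩ <;>
    · have h1 := vnum_bounds n j
      constructor <;> omega

lemma card_Dset (n : ℕ) (f : Fin n → Fin 3) : (Dset n f).card = kOf n f :=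
  card_image_of_injOn fun _ _ _ _ h => vnum_inj n h

lemma card_Rset (n : ℕ) (f : Fin n → Fin 3) : (Rset n f).card = n - kOf n f := by
  rw [Rset, card_image_of_injOn]
  · have := Finset.card_filter_add_card_filter_not
      (s := (univ : Finset (Fin n))) (p := fun j => f j = 2)
    simp only [card_univ, Fintype.card_fin] at this
    have h2 : (univ.filter fun j => f j = 2).card = kOf n f := rfl
    omega
  · intro j hj j' hj' h
    simp only [mem_coe, mem_filter, mem_univ, true_and] at hj hj'
    have hb := vnum_bounds n j
    have hb' := vnum_bounds n j'
    simp only [] at h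
    have : vnum n j = vnum n j' := by
      split_ifs at h with u v v <;> omega
    have := vnum_inj n this
    exact this

/-- the value function built from a labeling (1-indexed; 0 outside `[1,n]`). -/
noncomputable def aOf (n : ℕ) (f : Fin n → Fin 3) : ℕ → ℤ := fun i =>
  if h : 1 ≤ i ∧ i ≤ n then
    (if hk : i - 1 < kOf n f then
      -((Dset n f).orderEmbOfFin (card_Dset n f) ⟨i-1, hk⟩)
    else (Rset n f).orderEmbOfFin (card_Rset n f) ⟨i-1-kOf n f, by omega⟩)
  else 0

lemma aOf_zero (n : ℕ) (f : Fin n → Fin 3) : aOf n f 0 = 0 := by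
  rw [aOf, dif_neg (by omega)]

lemma aOf_lt_k {n : ℕ} {f : Fin n → Fin 3} {i : ℕ} (h1 : 1 ≤ i) (hk : i - 1 < kOf n f) :
    aOf n f i = -((Dset n f).orderEmbOfFin (card_Dset n f) ⟨i-1, hk⟩) := by
  have := kOf_le n f
  rw [aOf, dif_pos (by omega), dif_pos hk]

lemma aOf_ge_k {n : ℕ} {f : Fin n → Fin 3} {i : ℕ} (h1 : 1 ≤ i) (h2 : i ≤ n)
    (hk : kOf n f ≤ i - 1) :
    aOf n f i = (Rset n f).orderEmbOfFin (card_Rset n f) ⟨i-1-kOf n f, by omega⟩ := by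
  rw [aOf, dif_pos (by omega), dif_neg (by omega)]

lemma aOf_mem_D {n : ℕ} {f : Fin n → Fin 3} {i : ℕ} (h1 : 1 ≤ i) (hk : i - 1 < kOf n f) :
    -(aOf n f i) ∈ Dset n f := by
  rw [aOf_lt_k h1 hk, neg_neg]; exact Finset.orderEmbOfFin_mem _ _ _

lemma aOf_mem_R {n : ℕ} {f : Fin n → Fin 3} {i : ℕ} (h1 : 1 ≤ i) (h2 : i ≤ n)
    (hk : kOf n f ≤ i - 1) : aOf n f i ∈ Rset n f := by
  rw [aOf_ge_k h1 h2 hk]; exact Finset.orderEmbOfFin_mem _ _ _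

lemma aOf_neg {n : ℕ} {f : Fin n → Fin 3} {i : ℕ} (h1 : 1 ≤ i) (hk : i - 1 < kOf n f) :
    aOf n f i < 0 := by
  have := Dset_bounds (aOf_mem_D h1 hk); omega

lemma aOf_desc {n : ℕ} {f : Fin n → Fin 3} {i : ℕ} (h1 : 1 ≤ i) (hk : i < kOf n f) :
    aOf n f (i+1) < aOf n f i := by
  rw [aOf_lt_k h1 (by omega), aOf_lt_k (by omega : 1 ≤ i+1) (by omega : i+1-1 < kOf n f)]
  have := ((Dset n f).orderEmbOfFin (card_Dset n f)).strictMono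
    (show (⟨i-1, by omega⟩ : Fin (kOf n f)) < ⟨i+1-1, by omega⟩ by
      rw [Fin.mk_lt_mk]; omega)
  omega

lemma aOf_asc {n : ℕ} {f : Fin n → Fin 3} {i : ℕ} (hk : kOf n f ≤ i - 1) (h1 : 1 ≤ i)
    (h2 : i < n) : aOf n f i < aOf n f (i+1) := by
  rw [aOf_ge_k h1 (by omega) hk, aOf_ge_k (by omega : 1 ≤ i+1) (by omega) (by omega)]
  exact ((Rset n f).orderEmbOfFin (card_Rset n f)).strictMono
    (show (⟨i-1-kOf n f, by omega⟩ : Fin (n - kOf n f)) < ⟨i+1-1-kOf n f, by omega⟩ by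
      rw [Fin.mk_lt_mk]; omega)

lemma k_zero_all0 {n : ℕ} {f : Fin n → Fin 3} (hf : f ∈ Lset n) (hk : kOf n f = 0) :
    ∀ j, f j = 0 := by
  have hno2 : ∀ j, ¬ f j = 2 := by
    intro j hj
    have : j ∈ lab2 n f := by simp [lab2, hj]
    have := Finset.card_pos.mpr ⟨j, this⟩
    rw [show (lab2 n f).card = kOf n f from rfl, hk] at this
    omega
  intro j
  rcases show f j = 0 ∨ f j = 1 ∨ f j = 2 by
      rcases h : f j with ⟨v, hv⟩; interval_cases v <;> simp [Fin.ext_iff]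
    with h0 | h0 | h0
  · exact h0
  · obtain ⟨j', -, h2⟩ := mem_Lset.1 hf j h0
    exact absurd h2 (hno2 j')
  · exact absurd h0 (hno2 j)

lemma aOf_pos_of_kzero {n : ℕ} {f : Fin n → Fin 3} (hf : f ∈ Lset n) (hk : kOf n f = 0)
    {i : ℕ} (h1 : 1 ≤ i) (h2 : i ≤ n) : 0 < aOf n f i := by
  have hmem : aOf n f i ∈ Rset n f := aOf_mem_R h1 h2 (by omega)
  rcases mem_Rset.1 hmem with ⟨j, -, hx⟩ | ⟨j, hj, -⟩
  · have := vnum_bounds n j; omega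
  · have := k_zero_all0 hf hk j; rw [this] at hj; exact absurd hj (by decide)

lemma aOf_junction {n : ℕ} {f : Fin n → Fin 3} (hf : f ∈ Lset n)
    (hk1 : 1 ≤ kOf n f) (hkn : kOf n f < n) :
    aOf n f (kOf n f) < aOf n f (kOf n f + 1) := by
  set k := kOf n f with hkdef
  have hx : aOf n f k = -((Dset n f).orderEmbOfFin (card_Dset n f) ⟨k-1, by omega⟩) :=
    aOf_lt_k (by omega) (by omega)
  set x := (Dset n f).orderEmbOfFin (card_Dset n f) ⟨k-1, by omega⟩ with hxdef
  have hxmax : ∀ d ∈ Dset n f, d ≤ x := by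
    intro d hd
    have : d ∈ Set.range ((Dset n f).orderEmbOfFin (card_Dset n f)) := by
      rw [Finset.range_orderEmbOfFin]; exact hd
    obtain ⟨q, rfl⟩ := this
    exact ((Dset n f).orderEmbOfFin (card_Dset n f)).monotone
      (show q ≤ ⟨k-1, by omega⟩ by rw [Fin.le_def]; have := q.isLt; simp; omega)
  have hy : aOf n f (k+1) ∈ Rset n f := aOf_mem_R (by omega) (by omega) (by omega)
  have hx1 : 1 ≤ x := (Dset_bounds (Finset.orderEmbOfFin_mem _ _ _)).1
  rw [hx]
  rcases mem_Rset.1 hy with ⟨j, -, hval⟩ | ⟨j, hj1, hval⟩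
  · have := vnum_bounds n j; omega
  · obtain ⟨j', hj'lt, hj'2⟩ := mem_Lset.1 hf j hj1
    have hmem : vnum n j' ∈ Dset n f := mem_Dset.2 ⟨j', hj'2, rfl⟩
    have h1 := hxmax _ hmem
    have h2 := vnum_lt n hj'lt
    omega

lemma aOf_habs {n : ℕ} (f : Fin n → Fin 3) :
    ∀ i, 1 ≤ i → i ≤ n → 1 ≤ (aOf n f i).natAbs ∧ (aOf n f i).natAbs ≤ n := by
  intro i h1 h2
  by_cases hk : i - 1 < kOf n f
  · have := Dset_bounds (aOf_mem_D h1 hk); omega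
  · exact Rset_natAbs (aOf_mem_R h1 h2 (by omega))

lemma Dset_natAbs_label {n : ℕ} {f : Fin n → Fin 3} {x : ℤ} (hx : x ∈ Dset n f) :
    ∃ j : Fin n, f j = 2 ∧ x.natAbs = n - (j : ℕ) := by
  obtain ⟨j, h2, rfl⟩ := mem_Dset.1 hx
  exact ⟨j, h2, vnum_natAbs n j⟩

lemma Rset_natAbs_label {n : ℕ} {f : Fin n → Fin 3} {x : ℤ} (hx : x ∈ Rset n f) :
    ∃ j : Fin n, ¬ f j = 2 ∧ x.natAbs = n - (j : ℕ) := by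
  rcases mem_Rset.1 hx with ⟨j, h0, rfl⟩ | ⟨j, h0, rfl⟩
  · exact ⟨j, by rw [h0]; decide, vnum_natAbs n j⟩
  · exact ⟨j, by rw [h0]; decide, by rw [Int.natAbs_neg]; exact vnum_natAbs n j⟩

lemma Rset_natAbs_inj {n : ℕ} {f : Fin n → Fin 3} {x y : ℤ} (hx : x ∈ Rset n f)
    (hy : y ∈ Rset n f) (h : x.natAbs = y.natAbs) : x = y := by
  rcases mem_Rset.1 hx with ⟨j, h0, rfl⟩ | ⟨j, h0, rfl⟩ <;>
    rcases mem_Rset.1 hy with ⟨j', h0', rfl⟩ | ⟨j', h0', rfl⟩ <;>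
    have hb := vnum_bounds n j <;>
    have hb' := vnum_bounds n j' <;>
    have e1 := vnum_natAbs n j <;>
    have e2 := vnum_natAbs n j' <;>
    have hn1 : (-vnum n j).natAbs = (vnum n j).natAbs := Int.natAbs_neg _ <;>
    have hn2 : (-vnum n j').natAbs = (vnum n j').natAbs := Int.natAbs_neg _ <;>
    have hj : (j : ℕ) < n := j.isLt <;>
    have hj' : (j' : ℕ) < n := j'.isLt <;>
    have hjj : j = j' := Fin.ext (by omega)
  · subst hjj; rfl
  · exfalso; subst hjj; rw [h0] at h0'; exact absurd h0' (by decide)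
  · exfalso; subst hjj; rw [h0] at h0'; exact absurd h0' (by decide)
  · subst hjj; rfl

lemma aOf_hinj {n : ℕ} (f : Fin n → Fin 3) :
    ∀ i i', 1 ≤ i → i ≤ n → 1 ≤ i' → i' ≤ n →
      (aOf n f i).natAbs = (aOf n f i').natAbs → i = i' := by
  intro i i' h1 h2 h1' h2' h
  by_cases hk : i - 1 < kOf n f <;> by_cases hk' : i' - 1 < kOf n f
  · rw [aOf_lt_k h1 hk, aOf_lt_k h1' hk'] at h
    simp only [Int.natAbs_neg] at h
    have hb := Dset_bounds (Finset.orderEmbOfFin_mem _ (card_Dset n f) (⟨i-1, hk⟩ : Fin (kOf n f)))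
    have hb' := Dset_bounds (Finset.orderEmbOfFin_mem _ (card_Dset n f) (⟨i'-1, hk'⟩ : Fin (kOf n f)))
    have heq : (Dset n f).orderEmbOfFin (card_Dset n f) ⟨i-1, hk⟩ =
        (Dset n f).orderEmbOfFin (card_Dset n f) ⟨i'-1, hk'⟩ := by omega
    have := ((Dset n f).orderEmbOfFin (card_Dset n f)).injective heq
    have := congrArg Fin.val this
    simp only [] at this
    omega
  · exfalso
    obtain ⟨j, hj2, hjabs⟩ := Dset_natAbs_label (aOf_mem_D h1 hk)
    obtain ⟨j', hj2', hjabs'⟩ := Rset_natAbs_label (aOf_mem_R (f := f) h1' h2' (by omega))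
    rw [Int.natAbs_neg] at hjabs
    have : j = j' := Fin.ext (by have := j.isLt; have := j'.isLt; omega)
    subst this; exact hj2' hj2
  · exfalso
    obtain ⟨j, hj2, hjabs⟩ := Dset_natAbs_label (aOf_mem_D h1' hk')
    obtain ⟨j', hj2', hjabs'⟩ := Rset_natAbs_label (aOf_mem_R (f := f) h1 h2 (by omega))
    rw [Int.natAbs_neg] at hjabs
    have : j = j' := Fin.ext (by have := j.isLt; have := j'.isLt; omega)
    subst this; exact hj2' hj2
  · have hmem : aOf n f i ∈ Rset n f := aOf_mem_R h1 h2 (by omega)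
    have hmem' : aOf n f i' ∈ Rset n f := aOf_mem_R h1' h2' (by omega)
    have heq := Rset_natAbs_inj hmem hmem' h
    rw [aOf_ge_k h1 h2 (by omega), aOf_ge_k h1' h2' (by omega)] at heq
    have := ((Rset n f).orderEmbOfFin (card_Rset n f)).injective heq
    have := congrArg Fin.val this
    simp only [] at this
    omega

noncomputable def Psi (n : ℕ) (f : Fin n → Fin 3) : Equiv.Perm (Fin n) × (Fin n → Bool) :=
  mkP n (aOf n f) (aOf_habs f) (aOf_hinj f)

lemma Psi_bval {n : ℕ} (f : Fin n → Fin 3) {i : ℕ} (h1 : 1 ≤ i) (h2 : i ≤ n) :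
    bval n (Psi n f) i = aOf n f i := mkP_bval n _ _ _ h1 h2

lemma Psi_bvalHat {n : ℕ} (f : Fin n → Fin 3) {i : ℕ} (h2 : i ≤ n) :
    bvalHat n (Psi n f) i = aOf n f i := by
  rcases Nat.eq_zero_or_pos i with rfl | h1
  · rw [bvalHat, if_pos rfl, aOf_zero]
  · rw [bvalHat, if_neg (by omega)]; exact Psi_bval f h1 h2

lemma descChar {n : ℕ} {f : Fin n → Fin 3} (hf : f ∈ Lset n) {i : ℕ} (h1 : 1 ≤ i) (h2 : i ≤ n) :
    (aOf n f i < aOf n f (i-1) ↔ i ≤ kOf n f) := by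
  rcases eq_or_lt_of_le h1 with rfl | hi2
  · simp only [Nat.sub_self, aOf_zero]
    constructor
    · intro h
      by_contra hk
      have := aOf_pos_of_kzero hf (by omega) (le_refl 1) h2
      omega
    · intro hk
      exact aOf_neg (le_refl 1) (by omega)
  · have h1' : 1 ≤ i - 1 := by omega
    rcases lt_trichotomy i (kOf n f + 1) with hlt | heq | hgt
    · have := aOf_desc h1' (show i - 1 < kOf n f by omega)
      rw [show i - 1 + 1 = i by omega] at this
      exact ⟨fun _ => by omega, fun _ => this⟩
    · have hj := aOf_junction hf (by omega) (by omega)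
      rw [show kOf n f = i - 1 by omega, show i - 1 + 1 = i by omega] at hj
      exact ⟨fun h => by omega, fun h => by omega⟩
    · have := aOf_asc (show kOf n f ≤ i - 1 - 1 by omega) (by omega) (by omega)
      rw [show i - 1 + 1 = i by omega] at this
      exact ⟨fun h => by omega, fun h => by omega⟩

lemma Psi_noPeak {n : ℕ} {f : Fin n → Fin 3} (hf : f ∈ Lset n) :
    ((Finset.Icc 1 (n - 1)).filter fun i =>
      bvalHat n (Psi n f) (i - 1) < bvalHat n (Psi n f) i ∧
      bvalHat n (Psi n f) (i + 1) < bvalHat n (Psi n f) i) = ∅ := by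
  rw [filter_eq_empty_iff]
  intro i hi
  rw [mem_Icc] at hi
  rintro ⟨hasc, hdesc⟩
  have hn : 1 ≤ i ∧ i + 1 ≤ n := by omega
  rw [Psi_bvalHat f (show i - 1 ≤ n by omega), Psi_bvalHat f (show i ≤ n by omega)] at hasc
  rw [Psi_bvalHat f (show i + 1 ≤ n by omega), Psi_bvalHat f (show i ≤ n by omega)] at hdesc
  have hd : i + 1 ≤ kOf n f := by
    have := (descChar hf (show 1 ≤ i + 1 by omega) (show i + 1 ≤ n by omega)).1
    rw [show i + 1 - 1 = i by omega] at this
    exact this hdesc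
  have := (descChar hf hn.1 (by omega)).2 (by omega)
  omega

/-! ### structure of no-peak signed permutations -/

lemma bvalHat_eq_bval {n : ℕ} (π : Equiv.Perm (Fin n) × (Fin n → Bool)) {i : ℕ} (h1 : 1 ≤ i) :
    bvalHat n π i = bval n π i := if_neg (by omega)

def DescSet (n : ℕ) (π : Equiv.Perm (Fin n) × (Fin n → Bool)) : Finset ℕ :=
  (Finset.Icc 1 n).filter fun i => bvalHat n π i < bvalHat n π (i-1)

def kP (n : ℕ) (π : Equiv.Perm (Fin n) × (Fin n → Bool)) : ℕ := (DescSet n π).card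

lemma bvalHat_tricho {n : ℕ} (π : Equiv.Perm (Fin n) × (Fin n → Bool)) {i i' : ℕ}
    (h2 : i < i') (h3 : i' ≤ n) :
    bvalHat n π i < bvalHat n π i' ∨ bvalHat n π i' < bvalHat n π i := by
  rcases Nat.eq_zero_or_pos i with rfl | h1
  · rw [bvalHat, if_pos rfl, bvalHat_eq_bval π (by omega)]
    have := bval_ne_zero n π (show 1 ≤ i' by omega) h3
    omega
  · rw [bvalHat_eq_bval π (by omega), bvalHat_eq_bval π (by omega)]
    have := bval_ne n π (show 1 ≤ i by omega) (by omega) (show 1 ≤ i' by omega) h3 (by omega)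
    omega

section NP

variable {n : ℕ} {π : Equiv.Perm (Fin n) × (Fin n → Bool)}

def NoPeakH (n : ℕ) (π : Equiv.Perm (Fin n) × (Fin n → Bool)) : Prop :=
  ∀ i, 1 ≤ i → i ≤ n - 1 →
    ¬(bvalHat n π (i-1) < bvalHat n π i ∧ bvalHat n π (i+1) < bvalHat n π i)

lemma desc_step (hnp : NoPeakH n π) {i : ℕ} (h1 : 1 ≤ i) (h2 : i < n)
    (hd : bvalHat n π (i+1) < bvalHat n π i) : bvalHat n π i < bvalHat n π (i-1) := by
  by_contra hc
  have htr := bvalHat_tricho π (show i - 1 < i by omega) (show i ≤ n by omega)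
  exact hnp i h1 (by omega) ⟨by omega, hd⟩

lemma DescSet_downward (hnp : NoPeakH n π) :
    ∀ d i, 1 ≤ i → i + d ∈ DescSet n π → i ∈ DescSet n π := by
  intro d
  induction d with
  | zero => intro i h1 h; simpa using h
  | succ d ih =>
    intro i h1 h
    apply ih i h1
    have hmem := h
    rw [DescSet, mem_filter, mem_Icc] at hmem
    obtain ⟨⟨-, hub⟩, hd⟩ := hmem
    rw [show i + (d+1) = (i+d) + 1 by omega] at hd hub
    have hdd := desc_step hnp (show 1 ≤ i + d by omega) (show i + d < n by omega)
      (by rw [show i + d + 1 - 1 = i + d by omega] at hd; exact hd)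
    rw [DescSet, mem_filter, mem_Icc]
    exact ⟨⟨by omega, by omega⟩, hdd⟩

lemma DescSet_eq (hnp : NoPeakH n π) : DescSet n π = Finset.Icc 1 (kP n π) := by
  by_cases hs : DescSet n π = ∅
  · have h0 : kP n π = 0 := by rw [kP, hs]; simp
    rw [hs, h0]; simp
  · have hne := Finset.nonempty_iff_ne_empty.2 hs
    set m := (DescSet n π).max' hne with hm
    have heq : DescSet n π = Finset.Icc 1 m := by
      apply Finset.Subset.antisymm
      · intro x hx
        rw [mem_Icc]
        have h1 : 1 ≤ x := by
          have := (mem_filter.1 hx).1; rw [mem_Icc] at this; omega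
        exact ⟨h1, Finset.le_max' _ _ hx⟩
      · intro x hx
        rw [mem_Icc] at hx
        have hmm := (DescSet n π).max'_mem hne
        exact DescSet_downward hnp (m - x) x hx.1
          (by rw [show x + (m-x) = m by omega]; exact hmm)
    have hm1 : m + 1 - 1 = m := by omega
    rw [heq, kP, heq, Nat.card_Icc, hm1]

lemma desc_iff (hnp : NoPeakH n π) {i : ℕ} (h1 : 1 ≤ i) (h2 : i ≤ n) :
    (bvalHat n π i < bvalHat n π (i-1) ↔ i ≤ kP n π) := by
  have : (i ∈ DescSet n π) ↔ (i ∈ Finset.Icc 1 (kP n π)) := by rw [DescSet_eq hnp]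
  rw [DescSet, mem_filter, mem_Icc, mem_Icc] at this
  constructor
  · intro h; exact (this.1 ⟨⟨h1, h2⟩, h⟩).2
  · intro h; exact (this.2 ⟨h1, h⟩).2

lemma kP_le : kP n π ≤ n := by
  have h1 : DescSet n π ⊆ Finset.Icc 1 n := filter_subset _ _
  have := Finset.card_le_card h1
  rw [Nat.card_Icc] at this
  rw [kP]; omega

lemma prefix_nonpos (hnp : NoPeakH n π) : ∀ i, i ≤ kP n π → bvalHat n π i ≤ 0 := by
  intro i
  induction i with
  | zero => intro _; rw [bvalHat, if_pos rfl]
  | succ i ih =>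
    intro h
    have hk := kP_le (π := π)
    have hd := (desc_iff hnp (show 1 ≤ i+1 by omega) (by omega)).2 h
    rw [show i + 1 - 1 = i by omega] at hd
    have := ih (by omega)
    omega

lemma prefix_neg (hnp : NoPeakH n π) {i : ℕ} (h1 : 1 ≤ i) (hk : i ≤ kP n π) :
    bvalHat n π i < 0 := by
  have hd := (desc_iff hnp h1 (le_trans hk kP_le)).2 hk
  have := prefix_nonpos hnp (i-1) (by omega)
  omega

lemma prefix_chain (hnp : NoPeakH n π) :
    ∀ i' i, i < i' → i' ≤ kP n π → bvalHat n π i' < bvalHat n π i := by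
  intro i'
  induction i' with
  | zero => intro i h; omega
  | succ i' ih =>
    intro i h hk
    have hd := (desc_iff hnp (show 1 ≤ i'+1 by omega) (le_trans hk kP_le)).2 hk
    rw [show i' + 1 - 1 = i' by omega] at hd
    rcases Nat.lt_or_ge i i' with hlt | hge
    · exact lt_trans hd (ih i hlt (by omega))
    · have : i = i' := by omega
      subst this; exact hd

lemma suffix_asc (hnp : NoPeakH n π) {i : ℕ} (h : kP n π < i) (h2 : i ≤ n) :
    bvalHat n π (i-1) < bvalHat n π i := by
  have hd := desc_iff hnp (show 1 ≤ i by omega) h2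
  have htr := bvalHat_tricho π (show i - 1 < i by omega) h2
  omega

lemma suffix_chain (hnp : NoPeakH n π) :
    ∀ i' i, kP n π ≤ i → i < i' → i' ≤ n → bvalHat n π i < bvalHat n π i' := by
  intro i'
  induction i' with
  | zero => intro i _ h; omega
  | succ i' ih =>
    intro i hk h h2
    have ha := suffix_asc hnp (show kP n π < i' + 1 by omega) h2
    rw [show i' + 1 - 1 = i' by omega] at ha
    rcases Nat.lt_or_ge i i' with hlt | hge
    · exact lt_trans (ih i hk hlt (by omega)) ha
    · have : i = i' := by omega
      subst this; exact ha

end NP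

/-! ### the labeling map Φ -/

def posOf (n : ℕ) (π : Equiv.Perm (Fin n) × (Fin n → Bool)) (j : Fin n) : ℕ :=
  ((π.1⁻¹ ⟨n - 1 - (j : ℕ), by have := j.isLt; omega⟩ : Fin n) : ℕ) + 1

def Phi (n : ℕ) (π : Equiv.Perm (Fin n) × (Fin n → Bool)) : Fin n → Fin 3 := fun j =>
  if 0 < bvalHat n π (posOf n π j) then 0
  else if bvalHat n π (posOf n π j) < bvalHat n π (posOf n π j - 1) then 2 else 1

lemma posOf_bounds {n : ℕ} (π : Equiv.Perm (Fin n) × (Fin n → Bool)) (j : Fin n) :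
    1 ≤ posOf n π j ∧ posOf n π j ≤ n := by
  have := (π.1⁻¹ ⟨n - 1 - (j : ℕ), by have := j.isLt; omega⟩ : Fin n).isLt
  rw [posOf]; omega

lemma posOf_natAbs {n : ℕ} (π : Equiv.Perm (Fin n) × (Fin n → Bool)) (j : Fin n) :
    (bvalHat n π (posOf n π j)).natAbs = n - (j : ℕ) := by
  rw [bvalHat_eq_bval π (posOf_bounds π j).1, posOf, bval_natAbs' n π]
  rw [← Equiv.Perm.mul_apply, mul_inv_cancel, Equiv.Perm.one_apply]
  have := j.isLt
  simp only []
  omega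

lemma posOf_inj {n : ℕ} (π : Equiv.Perm (Fin n) × (Fin n → Bool)) {j j' : Fin n}
    (h : posOf n π j = posOf n π j') : j = j' := by
  have h1 := posOf_natAbs π j
  have h2 := posOf_natAbs π j'
  rw [h] at h1
  have := j.isLt
  have := j'.isLt
  exact Fin.ext (by omega)

lemma posOf_surj {n : ℕ} (π : Equiv.Perm (Fin n) × (Fin n → Bool)) {i : ℕ}
    (h1 : 1 ≤ i) (h2 : i ≤ n) : ∃ j : Fin n, posOf n π j = i := by
  have hb := bval_natAbs_le n π h1 h2
  refine ⟨⟨n - (bval n π i).natAbs, by omega⟩, ?_⟩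
  rw [posOf]
  have hval := bval_natAbs n π h1 h2
  have hσ : (⟨n - 1 - (n - (bval n π i).natAbs), by omega⟩ : Fin n) = π.1 ⟨i-1, by omega⟩ := by
    apply Fin.ext
    have := (π.1 ⟨i-1, by omega⟩).isLt
    simp only []
    omega
  rw [hσ, ← Equiv.Perm.mul_apply, inv_mul_cancel, Equiv.Perm.one_apply]
  simp only []
  omega

lemma orderEmbOfFin_eq_of_val {α : Type*} [LinearOrder α] {s : Finset α} {k k' : ℕ}
    (h : s.card = k) (h' : s.card = k') {q : Fin k} {q' : Fin k'} (hq : (q : ℕ) = (q' : ℕ)) :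
    s.orderEmbOfFin h q = s.orderEmbOfFin h' q' := by
  rw [Finset.orderEmbOfFin_apply, Finset.orderEmbOfFin_apply, Fin.getElem_fin, Fin.getElem_fin]
  rcases q with ⟨qv, hv⟩
  rcases q' with ⟨qv', hv'⟩
  simp only [] at hq
  subst hq
  rfl

section PhiL

variable {n : ℕ} {π : Equiv.Perm (Fin n) × (Fin n → Bool)}

lemma Phi_eq_zero_iff (j : Fin n) :
    Phi n π j = 0 ↔ 0 < bvalHat n π (posOf n π j) := by
  simp only [Phi]
  split_ifs with hp hd
  · exact ⟨fun _ => hp, fun _ => rfl⟩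
  · exact ⟨fun h => absurd h (by decide), fun h => absurd h hp⟩
  · exact ⟨fun h => absurd h (by decide), fun h => absurd h hp⟩

lemma Phi_eq_two_iff (hnp : NoPeakH n π) (j : Fin n) :
    Phi n π j = 2 ↔ posOf n π j ≤ kP n π := by
  have hb := posOf_bounds π j
  simp only [Phi]
  split_ifs with hp hd
  · constructor
    · intro h; exact absurd h (by decide)
    · intro hk; exact absurd hp (by have := prefix_neg hnp hb.1 hk; omega)
  · exact ⟨fun _ => (desc_iff hnp hb.1 hb.2).1 hd, fun _ => rfl⟩
  · constructor
    · intro h; exact absurd h (by decide)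
    · intro hk; exact absurd ((desc_iff hnp hb.1 hb.2).2 hk) hd

lemma Phi_eq_one_iff (hnp : NoPeakH n π) (j : Fin n) :
    Phi n π j = 1 ↔ (bvalHat n π (posOf n π j) < 0 ∧ kP n π < posOf n π j) := by
  have hb := posOf_bounds π j
  have hnz : bvalHat n π (posOf n π j) ≠ 0 := by
    rw [bvalHat_eq_bval π hb.1]; exact bval_ne_zero n π hb.1 hb.2
  simp only [Phi]
  split_ifs with hp hd
  · exact ⟨fun h => absurd h (by decide), fun h => by omega⟩
  · constructor
    · intro h; exact absurd h (by decide)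
    · rintro ⟨-, hk⟩; exact absurd ((desc_iff hnp hb.1 hb.2).1 hd) (by omega)
  · constructor
    · intro _
      refine ⟨by omega, ?_⟩
      by_contra hc
      exact hd ((desc_iff hnp hb.1 hb.2).2 (by omega))
    · intro _; rfl

lemma Dset_Phi (hnp : NoPeakH n π) (x : ℤ) :
    x ∈ Dset n (Phi n π) ↔ ∃ i, 1 ≤ i ∧ i ≤ kP n π ∧ x = -(bvalHat n π i) := by
  rw [mem_Dset]
  constructor
  · rintro ⟨j, hj2, rfl⟩
    have hpos := (Phi_eq_two_iff hnp j).1 hj2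
    have hb := posOf_bounds π j
    refine ⟨posOf n π j, hb.1, hpos, ?_⟩
    have hneg := prefix_neg hnp hb.1 hpos
    have habs := posOf_natAbs π j
    have hjlt := j.isLt
    unfold vnum; omega
  · rintro ⟨i, h1, hk, rfl⟩
    obtain ⟨j, hj⟩ := posOf_surj π h1 (le_trans hk kP_le)
    refine ⟨j, (Phi_eq_two_iff hnp j).2 (by rw [hj]; exact hk), ?_⟩
    have habs := posOf_natAbs π j
    rw [hj] at habs
    have hneg := prefix_neg hnp h1 hk
    have hjlt := j.isLt
    unfold vnum; omega

lemma Rset_Phi (hnp : NoPeakH n π) (x : ℤ) :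
    x ∈ Rset n (Phi n π) ↔ ∃ i, kP n π < i ∧ i ≤ n ∧ x = bvalHat n π i := by
  rw [mem_Rset]
  constructor
  · rintro (⟨j, hj0, rfl⟩ | ⟨j, hj1, rfl⟩)
    · have hpos := (Phi_eq_zero_iff j).1 hj0
      have hb := posOf_bounds π j
      have hkp : kP n π < posOf n π j := by
        by_contra hc
        have := prefix_neg hnp hb.1 (by omega)
        omega
      refine ⟨posOf n π j, hkp, hb.2, ?_⟩
      have habs := posOf_natAbs π j
      have := j.isLt
      unfold vnum; omega
    · have h1 := (Phi_eq_one_iff hnp j).1 hj1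
      have hb := posOf_bounds π j
      refine ⟨posOf n π j, h1.2, hb.2, ?_⟩
      have habs := posOf_natAbs π j
      have := j.isLt
      have := h1.1
      unfold vnum; omega
  · rintro ⟨i, hk, h2, rfl⟩
    obtain ⟨j, hj⟩ := posOf_surj π (by omega) h2
    have habs := posOf_natAbs π j
    rw [hj] at habs
    have hjlt := j.isLt
    have hnz : bvalHat n π i ≠ 0 := by
      rw [bvalHat_eq_bval π (by omega)]; exact bval_ne_zero n π (by omega) h2
    rcases lt_or_gt_of_ne hnz with hneg | hpos
    · right
      refine ⟨j, (Phi_eq_one_iff hnp j).2 ⟨by rw [hj]; exact hneg, by rw [hj]; exact hk⟩, ?_⟩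
      unfold vnum; omega
    · left
      refine ⟨j, (Phi_eq_zero_iff j).2 (by rw [hj]; exact hpos), ?_⟩
      unfold vnum; omega

lemma kOf_Phi (hnp : NoPeakH n π) : kOf n (Phi n π) = kP n π := by
  have hbij : (lab2 n (Phi n π)).card = (Finset.Icc 1 (kP n π)).card := by
    apply Finset.card_bij (fun (j : Fin n) (_ : j ∈ lab2 n (Phi n π)) => posOf n π j)
    · intro j hj
      rw [lab2, mem_filter] at hj
      rw [mem_Icc]
      exact ⟨(posOf_bounds π j).1, (Phi_eq_two_iff hnp j).1 hj.2⟩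
    · intro j hj j' hj' h
      exact posOf_inj π h
    · intro i hi
      rw [mem_Icc] at hi
      obtain ⟨j, hj⟩ := posOf_surj π hi.1 (le_trans hi.2 kP_le)
      refine ⟨j, ?_, hj⟩
      rw [lab2, mem_filter]
      exact ⟨mem_univ _, (Phi_eq_two_iff hnp j).2 (by rw [hj]; exact hi.2)⟩
  rw [kOf, hbij, Nat.card_Icc]
  omega

lemma aOf_Phi (hnp : NoPeakH n π) {i : ℕ} (h1 : 1 ≤ i) (h2 : i ≤ n) :
    aOf n (Phi n π) i = bvalHat n π i := by
  have hkk := kOf_Phi hnp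
  have hcardD : (Dset n (Phi n π)).card = kP n π := by rw [card_Dset, hkk]
  have hcardR : (Rset n (Phi n π)).card = n - kP n π := by rw [card_Rset, hkk]
  by_cases hk : i ≤ kP n π
  · have hklt : i - 1 < kOf n (Phi n π) := by omega
    rw [aOf_lt_k h1 hklt]
    set G : Fin (kP n π) → ℤ := fun q => -(bvalHat n π ((q : ℕ)+1)) with hG
    have hGmem : ∀ q, G q ∈ Dset n (Phi n π) := fun q =>
      (Dset_Phi hnp _).2 ⟨(q : ℕ)+1, by omega, by have := q.isLt; omega, rfl⟩
    have hGmono : StrictMono G := by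
      intro q q' hq
      have := prefix_chain hnp ((q' : ℕ)+1) ((q : ℕ)+1)
        (by have : (q : ℕ) < (q' : ℕ) := hq; omega) (by have := q'.isLt; omega)
      simp only [hG]
      omega
    have hGe := Finset.orderEmbOfFin_unique hcardD hGmem hGmono
    have := congrFun hGe (⟨i-1, by omega⟩ : Fin (kP n π))
    simp only [hG] at this
    rw [orderEmbOfFin_eq_of_val (card_Dset n (Phi n π)) hcardD
      (q := ⟨i-1, hklt⟩) (q' := ⟨i-1, by omega⟩) rfl, ← this,
      show i - 1 + 1 = i by omega]
    ring
  · have hkge : kOf n (Phi n π) ≤ i - 1 := by omega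
    rw [aOf_ge_k h1 h2 hkge]
    set H : Fin (n - kP n π) → ℤ := fun q => bvalHat n π (kP n π + (q : ℕ) + 1) with hH
    have hHmem : ∀ q, H q ∈ Rset n (Phi n π) := fun q =>
      (Rset_Phi hnp _).2 ⟨kP n π + (q : ℕ) + 1, by omega, by have := q.isLt; omega, rfl⟩
    have hHmono : StrictMono H := by
      intro q q' hq
      exact suffix_chain hnp (kP n π + (q' : ℕ) + 1) (kP n π + (q : ℕ) + 1)
        (by omega) (by have : (q : ℕ) < (q' : ℕ) := hq; omega) (by have := q'.isLt; omega)
    have hHe := Finset.orderEmbOfFin_unique hcardR hHmem hHmono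
    have hlt : i - 1 - kOf n (Phi n π) < n - kOf n (Phi n π) := by omega
    have := congrFun hHe (⟨i - 1 - kP n π, by omega⟩ : Fin (n - kP n π))
    simp only [hH] at this
    rw [orderEmbOfFin_eq_of_val (card_Rset n (Phi n π)) hcardR
      (q := ⟨i-1-kOf n (Phi n π), by omega⟩) (q' := ⟨i-1-kP n π, by omega⟩) (by simp [hkk]),
      ← this, show kP n π + (i - 1 - kP n π) + 1 = i by omega]

lemma Phi_mem_L (hnp : NoPeakH n π) : Phi n π ∈ Lset n := by
  rw [mem_Lset]
  intro j hj1
  obtain ⟨hneg, hkp⟩ := (Phi_eq_one_iff hnp j).1 hj1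
  have hb := posOf_bounds π j
  have hk1 : 1 ≤ kP n π := by
    by_contra hc
    have := suffix_chain hnp (posOf n π j) 0 (by omega) (by omega) hb.2
    rw [bvalHat, if_pos rfl] at this
    omega
  have hx := prefix_neg hnp hk1 (le_refl _)
  have hchain := suffix_chain hnp (posOf n π j) (kP n π) (le_refl _) hkp hb.2
  obtain ⟨j', hj'⟩ := posOf_surj π hk1 (le_trans (le_refl _) kP_le)
  refine ⟨j', ?_, (Phi_eq_two_iff hnp j').2 (by rw [hj'])⟩
  have habs := posOf_natAbs π j
  have habs' := posOf_natAbs π j'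
  rw [hj'] at habs'
  have := j.isLt
  have := j'.isLt
  rw [Fin.lt_def]
  omega

lemma Psi_Phi (hnp : NoPeakH n π) : Psi n (Phi n π) = π := by
  apply perm_ext
  intro i h1 h2
  rw [Psi_bval _ h1 h2, aOf_Phi hnp h1 h2, bvalHat_eq_bval π h1]

end PhiL

section G4

variable {n : ℕ} {f : Fin n → Fin 3}

lemma Psi_NoPeakH (hf : f ∈ Lset n) : NoPeakH n (Psi n f) := by
  intro i h1 h2 h
  exact (filter_eq_empty_iff.1 (Psi_noPeak hf)) (mem_Icc.2 ⟨h1, h2⟩) h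

lemma kP_Psi (hf : f ∈ Lset n) : kP n (Psi n f) = kOf n f := by
  have hD : DescSet n (Psi n f) = Finset.Icc 1 (kOf n f) := by
    ext i
    rw [DescSet, mem_filter, mem_Icc, mem_Icc]
    constructor
    · rintro ⟨⟨h1, h2⟩, hd⟩
      rw [Psi_bvalHat f (show i ≤ n by omega), Psi_bvalHat f (show i - 1 ≤ n by omega)] at hd
      exact ⟨h1, (descChar hf h1 h2).1 hd⟩
    · rintro ⟨h1, h2⟩
      have h2n : i ≤ n := le_trans h2 (kOf_le n f)
      refine ⟨⟨h1, h2n⟩, ?_⟩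
      rw [Psi_bvalHat f (show i ≤ n by omega), Psi_bvalHat f (show i - 1 ≤ n by omega)]
      exact (descChar hf h1 h2n).2 h2
  rw [kP, hD, Nat.card_Icc]
  omega

lemma Phi_Psi (hf : f ∈ Lset n) : Phi n (Psi n f) = f := by
  have hnp := Psi_NoPeakH hf
  have hkp := kP_Psi hf
  funext j
  have hb := posOf_bounds (Psi n f) j
  have habs := posOf_natAbs (Psi n f) j
  rw [Psi_bvalHat f hb.2] at habs
  have hjlt := j.isLt
  by_cases hk : posOf n (Psi n f) j - 1 < kOf n f
  · obtain ⟨j₂, hj₂2, hj₂abs⟩ := Dset_natAbs_label (aOf_mem_D hb.1 hk)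
    rw [Int.natAbs_neg] at hj₂abs
    have hjj : j₂ = j := Fin.ext (by have := j₂.isLt; omega)
    rw [hjj] at hj₂2
    rw [hj₂2]
    exact (Phi_eq_two_iff hnp j).2 (by omega)
  · have hmem : aOf n f (posOf n (Psi n f) j) ∈ Rset n f :=
      aOf_mem_R hb.1 hb.2 (by omega)
    rcases mem_Rset.1 hmem with ⟨j₂, hj₂0, hval⟩ | ⟨j₂, hj₂1, hval⟩
    · have hvb := vnum_bounds n j₂
      have habs2 : (aOf n f (posOf n (Psi n f) j)).natAbs = n - (j₂ : ℕ) := by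
        rw [hval]; exact vnum_natAbs n j₂
      have hjj : j₂ = j := Fin.ext (by have := j₂.isLt; omega)
      rw [hjj] at hj₂0 hval hvb
      rw [hj₂0]
      apply (Phi_eq_zero_iff j).2
      rw [Psi_bvalHat f hb.2, hval]
      omega
    · have hvb := vnum_bounds n j₂
      have habs2 : (aOf n f (posOf n (Psi n f) j)).natAbs = n - (j₂ : ℕ) := by
        rw [hval, Int.natAbs_neg]; exact vnum_natAbs n j₂
      have hjj : j₂ = j := Fin.ext (by have := j₂.isLt; omega)
      rw [hjj] at hj₂1 hval hvb
      rw [hj₂1]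
      apply (Phi_eq_one_iff hnp j).2
      constructor
      · rw [Psi_bvalHat f hb.2, hval]; omega
      · omega

end G4

/-- with `π_0 = 0`, the number of signed permutations with no peaks is `(3^n+1)/2`. -/
theorem stmt8 (n : ℕ) : 2 * PBhat n ∅ = 3 ^ n + 1 := by
  unfold PBhat
  have hP : (Finset.univ.filter fun π : Equiv.Perm (Fin n) × (Fin n → Bool) =>
      bPeakSetHat n π = ∅).card = (Lset n).card := by
    have hnp : ∀ π : Equiv.Perm (Fin n) × (Fin n → Bool),
        π ∈ (Finset.univ.filter fun π => bPeakSetHat n π = ∅) → NoPeakH n π := by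
      intro π hπ
      have h := (mem_filter.1 hπ).2
      rw [bPeakSetHat] at h
      intro i h1 h2 hh
      exact (filter_eq_empty_iff.1 h) (mem_Icc.2 ⟨h1, h2⟩) hh
    apply Finset.card_bij' (i := fun π _ => Phi n π) (j := fun f _ => Psi n f)
    · intro π hπ
      exact Phi_mem_L (hnp π hπ)
    · intro f hf
      rw [mem_filter]
      refine ⟨mem_univ _, ?_⟩
      unfold bPeakSetHat
      exact Psi_noPeak hf
    · intro π hπ
      exact Psi_Phi (hnp π hπ)
    · intro f hf
      exact Phi_Psi hf
  rw [hP, two_mul_card_Lset]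
end
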